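/- arXiv:1807.07457 — 6 statements merged into one kernel-verified Lean document; each statement's English description precedes it below -/
import Mathlib

section
/- Let λ be a composition of n and let u, t be column standard λ-tableaux with u ≠ t. Let i be maximal such that the restrictions of u and t to entries ≤ i agree. If t dominates u (i.e., shape(t restricted to entries ≤ m) dominates shape(u restricted to entries ≤ m) for all m ∈ [1,n]), then the column index of i+1 in u is strictly less than the column index of i+1 in t. -/
/-- Partial sum `λ₁ + ⋯ + λ_k` of a 1-indexed sequence of parts. -/
def psum (lam : ℕ → ℕ) (k : ℕ) : ℕ := ∑ i ∈ Finset.Icc 1 k, lam i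

/-- `lam` is a composition of `n` (1-indexed parts, extended by zeros). -/
def IsComp (n : ℕ) (lam : ℕ → ℕ) : Prop :=
  lam 0 = 0 ∧ ∃ N, (∀ i, N < i → lam i = 0) ∧ psum lam N = n

/-- `lam` is a partition of `n` (weakly decreasing parts). -/
def IsPartition (n : ℕ) (lam : ℕ → ℕ) : Prop :=
  IsComp n lam ∧ ∀ i j, 1 ≤ i → i ≤ j → lam j ≤ lam i

/-- Dominance order in the paper's (column) convention: `lam` dominates `mu`
(written `mu ≤ lam`) iff every partial sum of `lam` is at most the
corresponding partial sum of `mu`. -/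
def Dominates (lam mu : ℕ → ℕ) : Prop := ∀ k, psum lam k ≤ psum mu k

/-- Row index of the box containing the entry `k`. -/
def rowT (p : ℕ → ℕ × ℕ) (k : ℕ) : ℕ := (p k).1
/-- Column index of the box containing the entry `k`. -/
def colT (p : ℕ → ℕ × ℕ) (k : ℕ) : ℕ := (p k).2

/-- `p` is the position function of a bijective filling of the skew diagram
`[lam] ∖ [mu]` (1-indexed rows and columns, `lam j` boxes in column `j`)
by the entries `a+1, …, a+n`. -/
def IsSkewTab (lam mu : ℕ → ℕ) (a n : ℕ) (p : ℕ → ℕ × ℕ) : Prop :=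
  (∀ k ∈ Finset.Icc (a+1) (a+n),
      1 ≤ (p k).2 ∧ mu (p k).2 < (p k).1 ∧ (p k).1 ≤ lam (p k).2) ∧
  (∀ k ∈ Finset.Icc (a+1) (a+n), ∀ l ∈ Finset.Icc (a+1) (a+n), p k = p l → k = l) ∧
  (∀ c : ℕ × ℕ, 1 ≤ c.2 → mu c.2 < c.1 → c.1 ≤ lam c.2 →
      ∃ k ∈ Finset.Icc (a+1) (a+n), p k = c)

/-- A straight-shape `lam`-tableau with entries `1, …, n`. -/
def IsTab (lam : ℕ → ℕ) (n : ℕ) (p : ℕ → ℕ × ℕ) : Prop :=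
  IsSkewTab lam (fun _ => 0) 0 n p

/-- Entries increase down each column. -/
def ColStd (a n : ℕ) (p : ℕ → ℕ × ℕ) : Prop :=
  ∀ k ∈ Finset.Icc (a+1) (a+n), ∀ l ∈ Finset.Icc (a+1) (a+n),
    colT p k = colT p l → rowT p k < rowT p l → k < l

/-- Entries increase along each row. -/
def RowStd (a n : ℕ) (p : ℕ → ℕ × ℕ) : Prop :=
  ∀ k ∈ Finset.Icc (a+1) (a+n), ∀ l ∈ Finset.Icc (a+1) (a+n),
    rowT p k = rowT p l → colT p k < colT p l → k < l

/-- Standard skew tableau of shape `lam/mu` with entries `a+1, …, a+n`. -/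
def IsStdSkew (lam mu : ℕ → ℕ) (a n : ℕ) (p : ℕ → ℕ × ℕ) : Prop :=
  IsSkewTab lam mu a n p ∧ ColStd a n p ∧ RowStd a n p

/-- Standard `lam`-tableau with entries `1, …, n`. -/
def IsStd (lam : ℕ → ℕ) (n : ℕ) (p : ℕ → ℕ × ℕ) : Prop :=
  IsStdSkew lam (fun _ => 0) 0 n p

/-- Column standard straight-shape `lam`-tableau. -/
def IsColStdTab (lam : ℕ → ℕ) (n : ℕ) (p : ℕ → ℕ × ℕ) : Prop :=
  IsTab lam n p ∧ ColStd 0 n p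

/-- `i ∈ D(p)`: a descent, `col(i) ≥ col(i+1)`. -/
def inD (a n : ℕ) (p : ℕ → ℕ × ℕ) (i : ℕ) : Prop :=
  a + 1 ≤ i ∧ i + 1 ≤ a + n ∧ colT p (i+1) ≤ colT p i
/-- `i ∈ SD(p)`: a strong descent, `col(i) > col(i+1)`. -/
def inSD (a n : ℕ) (p : ℕ → ℕ × ℕ) (i : ℕ) : Prop :=
  a + 1 ≤ i ∧ i + 1 ≤ a + n ∧ colT p (i+1) < colT p i
/-- `i ∈ WD(p)`: a weak descent, `col(i) = col(i+1)`. -/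
def inWD (a n : ℕ) (p : ℕ → ℕ × ℕ) (i : ℕ) : Prop :=
  a + 1 ≤ i ∧ i + 1 ≤ a + n ∧ colT p (i+1) = colT p i
/-- `i ∈ A(p)`: an ascent, `col(i) < col(i+1)`. -/
def inA (a n : ℕ) (p : ℕ → ℕ × ℕ) (i : ℕ) : Prop :=
  a + 1 ≤ i ∧ i + 1 ≤ a + n ∧ colT p i < colT p (i+1)
/-- `i ∈ SA(p)`: a strong ascent, `row(i) > row(i+1)`. -/
def inSA (a n : ℕ) (p : ℕ → ℕ × ℕ) (i : ℕ) : Prop :=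
  a + 1 ≤ i ∧ i + 1 ≤ a + n ∧ rowT p (i+1) < rowT p i

/-- Descent set of a tableau with entries `1, …, n`. -/
def Dset (n : ℕ) (p : ℕ → ℕ × ℕ) : Set ℕ := {i | inD 0 n p i}

/-- Shape of the restriction of `p` to entries `≤ m`: the number of boxes
of column `j` occupied by entries `≤ m`. -/
def resShape (p : ℕ → ℕ × ℕ) (m j : ℕ) : ℕ :=
  ((Finset.Icc 1 m).filter (fun k => colT p k = j)).card

/-- Extended dominance order on standard tableaux with `n` boxes: `u ≤ t`. -/
def ExtDomLe (n : ℕ) (pu pt : ℕ → ℕ × ℕ) : Prop :=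
  ∀ m ∈ Finset.Icc 1 n, Dominates (fun j => resShape pt m j) (fun j => resShape pu m j)

/-- `i` is the restriction number of `(u,t)`: the restrictions to entries `≤ i`
agree, and `i` is maximal with this property. -/
def RestNum (n : ℕ) (pu pt : ℕ → ℕ × ℕ) (i : ℕ) : Prop :=
  i ≤ n ∧ (∀ k, 1 ≤ k → k ≤ i → pu k = pt k) ∧ (i = n ∨ pu (i+1) ≠ pt (i+1))

/-- `(u,t)` is favourable with restriction number `i`:
`i` lies in the symmetric difference `D(u) ⊕ D(t)`. -/
def Favourable (n : ℕ) (pu pt : ℕ → ℕ × ℕ) (i : ℕ) : Prop :=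
  RestNum n pu pt i ∧
    ((inD 0 n pu i ∧ ¬ inD 0 n pt i) ∨ (inD 0 n pt i ∧ ¬ inD 0 n pu i))

/-- Dual Knuth move of the first kind of index `k` from `u` to `t`,
on standard tableaux of shape `lam`:  `t = s_k u` with
`D(u) ∩ {k-1,k} = {k-1}` and `D(t) ∩ {k-1,k} = {k}`. -/
def DK1 (lam : ℕ → ℕ) (n : ℕ) (pu pt : ℕ → ℕ × ℕ) (k : ℕ) : Prop :=
  IsStd lam n pu ∧ IsStd lam n pt ∧ 2 ≤ k ∧
  (∀ m, pt m = pu (Equiv.swap k (k+1) m)) ∧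
  inD 0 n pu (k-1) ∧ ¬ inD 0 n pu k ∧ inD 0 n pt k ∧ ¬ inD 0 n pt (k-1)

/-- Dual Knuth move of the second kind of index `k` from `u` to `t`:
`t = s_k u` with `D(u) ∩ {k,k+1} = {k+1}` and `D(t) ∩ {k,k+1} = {k}`. -/
def DK2 (lam : ℕ → ℕ) (n : ℕ) (pu pt : ℕ → ℕ × ℕ) (k : ℕ) : Prop :=
  IsStd lam n pu ∧ IsStd lam n pt ∧ k + 2 ≤ n ∧
  (∀ m, pt m = pu (Equiv.swap k (k+1) m)) ∧
  inD 0 n pu (k+1) ∧ ¬ inD 0 n pu k ∧ inD 0 n pt k ∧ ¬ inD 0 n pt (k+1)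

/-- A dual Knuth move (of either kind) of index `k` from `u` to `t`. -/
def DKMove (lam : ℕ → ℕ) (n : ℕ) (pu pt : ℕ → ℕ × ℕ) (k : ℕ) : Prop :=
  DK1 lam n pu pt k ∨ DK2 lam n pu pt k

/-- A paired dual Knuth move: a dual Knuth move of the same kind and the same
index applied simultaneously to both components of a pair. -/
def PairedDKMove (mu lam : ℕ → ℕ) (n : ℕ)
    (a b : (ℕ → ℕ × ℕ) × (ℕ → ℕ × ℕ)) : Prop :=
  ∃ k, (DK1 mu n a.1 b.1 k ∧ DK1 lam n a.2 b.2 k) ∨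
       (DK2 mu n a.1 b.1 k ∧ DK2 lam n a.2 b.2 k)

/-- Paired dual Knuth equivalence: the equivalence relation generated by
paired dual Knuth moves. -/
def PairedDKEquiv (mu lam : ℕ → ℕ) (n : ℕ)
    (a b : (ℕ → ℕ × ℕ) × (ℕ → ℕ × ℕ)) : Prop :=
  Relation.ReflTransGen
    (fun x y => PairedDKMove mu lam n x y ∨ PairedDKMove mu lam n y x) a b

/-- Lexicographic order on same-shape column standard tableaux: `u <_lex t`. -/
def LexLT (n : ℕ) (pu pt : ℕ → ℕ × ℕ) : Prop :=
  ∃ l, 1 ≤ l ∧ l ≤ n ∧ colT pt l < colT pu l ∧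
    ∀ m, l < m → m ≤ n → colT pt m = colT pu m

/-- `w` is a permutation of `[1,n]`, fixing all other natural numbers. -/
def IsPermOf (n : ℕ) (w : ℕ → ℕ) : Prop :=
  (∀ k ∈ Finset.Icc 1 n, w k ∈ Finset.Icc 1 n) ∧
  (∀ k ∈ Finset.Icc 1 n, ∀ l ∈ Finset.Icc 1 n, w k = w l → k = l) ∧
  (∀ k, k ∉ Finset.Icc 1 n → w k = k)

/-- The Coxeter length of `w ∈ S_n`: the number of inversions. -/
def lenInv (n : ℕ) (w : ℕ → ℕ) : ℕ :=
  ((Finset.Icc 1 n ×ˢ Finset.Icc 1 n).filter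
    (fun q => q.1 < q.2 ∧ w q.2 < w q.1)).card

/-- One step of the Bruhat order on `S_n`: `y = (i j) ∘ x` (so `y x⁻¹` is a
reflection) with `l(x) < l(y)`. -/
def BruhatStep (n : ℕ) (x y : ℕ → ℕ) : Prop :=
  lenInv n x < lenInv n y ∧
  ∃ i j, 1 ≤ i ∧ i < j ∧ j ≤ n ∧ ∀ k, y k = Equiv.swap i j (x k)

/-- The Bruhat order on `S_n`. -/
def BruhatLe (n : ℕ) (x y : ℕ → ℕ) : Prop :=
  Relation.ReflTransGen (BruhatStep n) x y

/-- One step of the left weak order on `S_n`: `y = s_i ∘ x` with `l(x) < l(y)`. -/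
def WeakStep (n : ℕ) (x y : ℕ → ℕ) : Prop :=
  lenInv n x < lenInv n y ∧
  ∃ i, 1 ≤ i ∧ i + 1 ≤ n ∧ ∀ k, y k = Equiv.swap i (i+1) (x k)

/-- The left weak order on `S_n`. -/
def WeakLe (n : ℕ) (x y : ℕ → ℕ) : Prop :=
  Relation.ReflTransGen (WeakStep n) x y

/-- `ptau` is (the position function of) the column superstandard tableau
`τ_lam`: column standard, with the columns filled in order from left to right. -/
def IsSuperstandard (lam : ℕ → ℕ) (n : ℕ) (ptau : ℕ → ℕ × ℕ) : Prop :=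
  IsTab lam n ptau ∧ ColStd 0 n ptau ∧
  ∀ k, 1 ≤ k → k + 1 ≤ n → colT ptau k ≤ colT ptau (k+1)

/-- `w = perm(t)`, i.e. `w · τ_lam = t`: for each `k`, the box of `τ_lam`
containing `k` contains `w k` in `t`. -/
def IsPermTab (n : ℕ) (ptau pt : ℕ → ℕ × ℕ) (w : ℕ → ℕ) : Prop :=
  IsPermOf n w ∧ ∀ k ∈ Finset.Icc 1 n, pt (w k) = ptau k

/-- `p` (a standard skew tableau of shape `lam/mu` with entries `a+1, …, a+n`)
is the `(a+1)`-critical tableau: writing `m = a+1`, the entry `m` lies in the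
first nonempty column `i` of the skew diagram, `m+1` lies in column `i+1`,
and the restriction to entries `> m+1` is minimal (no strong descents). -/
def IsCritical (lam mu : ℕ → ℕ) (a n : ℕ) (p : ℕ → ℕ × ℕ) : Prop :=
  IsStdSkew lam mu a n p ∧
  (∀ j, 1 ≤ j → j < colT p (a+1) → lam j ≤ mu j) ∧
  mu (colT p (a+1)) < lam (colT p (a+1)) ∧
  colT p (a+2) = colT p (a+1) + 1 ∧
  ∀ i, a + 3 ≤ i → i + 1 ≤ a + n → colT p i ≤ colT p (i+1)

/-- The box `c` is removable from the diagram of `lam`. -/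
def Removable (lam : ℕ → ℕ) (c : ℕ × ℕ) : Prop :=
  1 ≤ c.2 ∧ c.1 = lam c.2 ∧ lam (c.2 + 1) < c.1

/-- One step of a jeu de taquin slide on a filling `p` with entries `1, …, n`:
the hole moves from `b` to `b'`, where `b'` is the box (below or to the right
of `b`) containing the smaller entry `x` among the occupied candidates, and the
filling is updated by moving `x` into `b`. -/
def SlideStep (n : ℕ) (p : ℕ → ℕ × ℕ) (b : ℕ × ℕ)
    (p' : ℕ → ℕ × ℕ) (b' : ℕ × ℕ) : Prop :=
  ∃ x, 1 ≤ x ∧ x ≤ n ∧ p x = b' ∧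
    (b' = (b.1 + 1, b.2) ∨ b' = (b.1, b.2 + 1)) ∧
    (∀ y, 1 ≤ y → y ≤ n → (p y = (b.1 + 1, b.2) ∨ p y = (b.1, b.2 + 1)) → x ≤ y) ∧
    (∀ y, p' y = if y = x then b else p y)

/-- `lam/mu` is a skew partition of `n`. -/
def IsSkewShape (n : ℕ) (lam mu : ℕ → ℕ) : Prop :=
  (∃ m, IsPartition (m + n) lam ∧ IsPartition m mu) ∧ ∀ j, mu j ≤ lam j

lemma row_eq_resShape (lam : ℕ → ℕ) (n : ℕ) (p : ℕ → ℕ × ℕ)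
    (h : IsColStdTab lam n p) (k : ℕ) (hk1 : 1 ≤ k) (hk : k ≤ n) :
    rowT p k = resShape p k (colT p k) := by
  obtain ⟨⟨hbox, hinj, hsurj⟩, hcs⟩ := h
  unfold ColStd at hcs
  simp only [Nat.zero_add] at hbox hinj hsurj hcs
  set r := rowT p k with hr
  set c := colT p k with hc
  have hkmem : k ∈ Finset.Icc 1 n := Finset.mem_Icc.2 ⟨hk1, hk⟩
  obtain ⟨hc1, hr1, hrlam⟩ := hbox k hkmem
  unfold resShape
  symm
  rw [show r = (Finset.Icc 1 r).card by simp]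
  apply Finset.card_bij (fun (b : ℕ) _ => rowT p b)
  · -- maps into Icc 1 r
    intro l hl
    rw [Finset.mem_filter, Finset.mem_Icc] at hl
    obtain ⟨⟨hl1, hlk⟩, hlc⟩ := hl
    have hlmem : l ∈ Finset.Icc 1 n := Finset.mem_Icc.2 ⟨hl1, le_trans hlk hk⟩
    obtain ⟨_, hlr1, _⟩ := hbox l hlmem
    refine Finset.mem_Icc.2 ⟨hlr1, ?_⟩
    by_contra hcon
    push_neg at hcon
    have : k < l := hcs k hkmem l hlmem (by rw [hlc]) (by omega)
    omega
  · -- injective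
    intro a ha b hb hab
    rw [Finset.mem_filter, Finset.mem_Icc] at ha hb
    have hamem : a ∈ Finset.Icc 1 n := Finset.mem_Icc.2 ⟨ha.1.1, le_trans ha.1.2 hk⟩
    have hbmem : b ∈ Finset.Icc 1 n := Finset.mem_Icc.2 ⟨hb.1.1, le_trans hb.1.2 hk⟩
    exact hinj a hamem b hbmem (Prod.ext hab (by rw [show (p a).2 = colT p a from rfl,
      show (p b).2 = colT p b from rfl, ha.2, hb.2]))
  · -- surjective
    intro b hb
    rw [Finset.mem_Icc] at hb
    have hrl : r ≤ lam c := hrlam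
    obtain ⟨l, hlmem, hpl⟩ := hsurj (b, c) hc1 (by omega) (le_trans hb.2 hrl)
    rw [Finset.mem_Icc] at hlmem
    have hcol : colT p l = c := by rw [colT, hpl]
    have hrow : rowT p l = b := by rw [rowT, hpl]
    have hlk : l ≤ k := by
      rcases eq_or_lt_of_le hb.2 with heq | hlt
      · have : p l = p k := by
          rw [hpl]; exact Prod.ext (by rw [rowT] at hr; omega) (by rw [colT] at hc; omega)
        have := hinj l (Finset.mem_Icc.2 hlmem) k hkmem this
        omega
      · have : l < k := hcs l (Finset.mem_Icc.2 hlmem) k hkmem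
          (by rw [hcol]) (by omega)
        omega
    exact ⟨l, Finset.mem_filter.2 ⟨Finset.mem_Icc.2 ⟨hlmem.1, hlk⟩, hcol⟩, hrow⟩

lemma resShape_succ (p : ℕ → ℕ × ℕ) (m j : ℕ) :
    resShape p (m+1) j = resShape p m j + (if colT p (m+1) = j then 1 else 0) := by
  unfold resShape
  rw [show Finset.Icc 1 (m+1) = insert (m+1) (Finset.Icc 1 m) by
    ext x; simp [Finset.mem_Icc]; omega]
  rw [Finset.filter_insert]
  split_ifs with h
  · rw [Finset.card_insert_of_notMem (by simp [Finset.mem_Icc])]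
  · rfl

/-- if `t` dominates `u` then the entry after the last agreement
sits in a strictly smaller column of `u` than of `t`. -/
theorem dominance_col_of_first_disagreement (n : ℕ) (lam : ℕ → ℕ)
    (hlam : IsComp n lam) (pu pt : ℕ → ℕ × ℕ)
    (hu : IsColStdTab lam n pu) (ht : IsColStdTab lam n pt)
    (i : ℕ) (hin : i + 1 ≤ n)
    (hagree : ∀ k, 1 ≤ k → k ≤ i → pu k = pt k)
    (hne : pu (i+1) ≠ pt (i+1))
    (hdom : ∀ m ∈ Finset.Icc 1 n,
      Dominates (fun j => resShape pt m j) (fun j => resShape pu m j)) :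
    colT pu (i+1) < colT pt (i+1) := by
  set cu := colT pu (i+1) with hcu
  set ct := colT pt (i+1) with hct
  have hi1mem : i + 1 ∈ Finset.Icc 1 n := Finset.mem_Icc.2 ⟨by omega, hin⟩
  have hi1memu : i + 1 ∈ Finset.Icc (0+1) (0+n) := by
    rw [Finset.mem_Icc]; omega
  have hcu1 : 1 ≤ cu := (hu.1.1 (i+1) hi1memu).1
  have hct1 : 1 ≤ ct := (ht.1.1 (i+1) hi1memu).1
  -- restrictions to ≤ i agree
  have hres : ∀ j, resShape pu i j = resShape pt i j := by
    intro j
    unfold resShape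
    congr 1
    apply Finset.filter_congr
    intro x hx
    rw [Finset.mem_Icc] at hx
    simp only [colT, hagree x hx.1 hx.2]
  have hpsum : ∀ k, psum (fun j => resShape pu i j) k = psum (fun j => resShape pt i j) k := by
    intro k; unfold psum; exact Finset.sum_congr rfl (fun x _ => hres x)
  have hpsucc : ∀ (p : ℕ → ℕ × ℕ) k, psum (fun j => resShape p (i+1) j) k
      = psum (fun j => resShape p i j) k + (if colT p (i+1) ∈ Finset.Icc 1 k then 1 else 0) := by
    intro p k
    unfold psum
    simp only [resShape_succ]
    rw [Finset.sum_add_distrib, Finset.sum_ite_eq (Finset.Icc 1 k) (colT p (i+1)) (fun _ => (1 : ℕ))]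
  have hdom1 := hdom (i+1) hi1mem ct
  simp only [hpsucc] at hdom1
  rw [hpsum ct] at hdom1
  have hcumem : cu ∈ Finset.Icc 1 cu := Finset.mem_Icc.2 ⟨hcu1, le_refl _⟩
  by_contra hcon
  push_neg at hcon
  -- so ct ≤ cu; dominance at k = ct forces cu ≤ ct
  have hctmem : ct ∈ Finset.Icc 1 ct := Finset.mem_Icc.2 ⟨hct1, le_refl _⟩
  rw [if_pos hctmem] at hdom1
  have hcule : cu ≤ ct := by
    by_contra h'
    rw [if_neg (by rw [Finset.mem_Icc]; omega)] at hdom1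
    omega
  have hceq : cu = ct := le_antisymm hcule hcon
  -- then rows also agree, contradiction
  have hru := row_eq_resShape lam n pu hu (i+1) (by omega) hin
  have hrt := row_eq_resShape lam n pt ht (i+1) (by omega) hin
  rw [resShape_succ, if_pos rfl] at hru hrt
  rw [← hcu] at hru
  rw [← hct] at hrt
  have hroweq : rowT pu (i+1) = rowT pt (i+1) := by
    rw [hru, hrt, hceq, hres]
  exact hne (Prod.ext hroweq hceq)
end

section
/- Let λ be a composition of n and u, t column standard λ-tableaux. If perm(t) ≥ perm(u) in the Bruhat order on the symmetric group S_n, then t ≥_lex u, where t >_lex u means there exists l ∈ [1,n] with col_t(l) < col_u(l) and col_t(i) = col_u(i) for all i ∈ [l+1, n]. -/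
namespace BrLex

open Finset

/-- rank function: number of `k ∈ [1,P]` with `w k ≤ m`. -/
def rk (w : ℕ → ℕ) (P m : ℕ) : ℕ := ((Finset.Icc 1 P).filter (fun k => w k ≤ m)).card

lemma permOf_surj {n : ℕ} {x : ℕ → ℕ} (hx : IsPermOf n x) :
    ∀ i ∈ Finset.Icc 1 n, ∃ a ∈ Finset.Icc 1 n, x a = i := by
  intro i hi
  obtain ⟨h1, h2, _⟩ := hx
  obtain ⟨a, ha, hxa⟩ := Finset.surj_on_of_inj_on_of_card_le
    (s := Finset.Icc 1 n) (t := Finset.Icc 1 n) (fun a _ => x a)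
    (fun a ha => h1 a ha) (fun a b ha hb h => h2 a ha b hb h) le_rfl i hi
  exact ⟨a, ha, hxa.symm⟩

lemma swap_basic {n : ℕ} {x y : ℕ → ℕ} (hx : IsPermOf n x) {a b : ℕ}
    (ha : a ∈ Finset.Icc 1 n) (hb : b ∈ Finset.Icc 1 n)
    (hy : ∀ k, y k = Equiv.swap (x a) (x b) (x k)) :
    ∀ k, y k = x (Equiv.swap a b k) := by
  obtain ⟨h1, h2, h3⟩ := hx
  intro k
  rcases eq_or_ne k a with rfl | hka
  · rw [hy, Equiv.swap_apply_left, Equiv.swap_apply_left]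
  rcases eq_or_ne k b with rfl | hkb
  · rw [hy, Equiv.swap_apply_right, Equiv.swap_apply_right]
  rw [hy, Equiv.swap_apply_of_ne_of_ne hka hkb]
  by_cases hk : k ∈ Finset.Icc 1 n
  · refine Equiv.swap_apply_of_ne_of_ne (fun h => hka (h2 k hk a ha h))
      (fun h => hkb (h2 k hk b hb h))
  · have hxk : x k = k := h3 k hk
    refine Equiv.swap_apply_of_ne_of_ne (fun h => ?_) (fun h => ?_)
    · exact hk (by rw [← hxk, h]; exact h1 a ha)
    · exact hk (by rw [← hxk, h]; exact h1 b hb)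

lemma swap_len {n : ℕ} {x y : ℕ → ℕ} (hx : IsPermOf n x) {a b : ℕ}
    (ha : a ∈ Finset.Icc 1 n) (hb : b ∈ Finset.Icc 1 n) (hab : a < b) (hv : x a < x b)
    (hy : ∀ k, y k = Equiv.swap (x a) (x b) (x k)) :
    lenInv n x ≤ lenInv n y := by
  have hyc := swap_basic hx ha hb hy
  have hyc' : ∀ k, y (Equiv.swap a b k) = x k := by
    intro k; rw [hyc, Equiv.swap_apply_self]
  rw [Finset.mem_Icc] at ha hb
  unfold lenInv
  apply Finset.card_le_card_of_injOn
    (fun q => if (q.1 = a ∧ q.2 < b) ∨ (q.2 = b ∧ a < q.1) then q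
      else (Equiv.swap a b q.1, Equiv.swap a b q.2))
  · intro q hq
    simp only [Finset.mem_coe, Finset.mem_filter, Finset.mem_product, Finset.mem_Icc] at hq ⊢
    obtain ⟨⟨hq1, hq2⟩, hlt, hinv⟩ := hq
    have hne2 : ¬(q.1 = a ∧ q.2 = b) := by
      rintro ⟨e1, e2⟩; rw [e1, e2] at hinv; omega
    split_ifs with hc
    · rcases hc with ⟨e1, e2⟩ | ⟨e1, e2⟩
      · have h2a : q.2 ≠ a := by omega
        have h2b : q.2 ≠ b := by omega
        refine ⟨⟨hq1, hq2⟩, hlt, ?_⟩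
        rw [e1, hyc a, Equiv.swap_apply_left, hyc q.2,
          Equiv.swap_apply_of_ne_of_ne h2a h2b]
        rw [e1] at hinv; omega
      · have h1a : q.1 ≠ a := by omega
        have h1b : q.1 ≠ b := by omega
        refine ⟨⟨hq1, hq2⟩, hlt, ?_⟩
        rw [e1, hyc b, Equiv.swap_apply_right, hyc q.1,
          Equiv.swap_apply_of_ne_of_ne h1a h1b]
        rw [e1] at hinv; omega
    · have h3 : y (Equiv.swap a b q.2) < y (Equiv.swap a b q.1) := by
        rw [hyc' q.1, hyc' q.2]; exact hinv
      have hm : ∀ m, 1 ≤ m → m ≤ n → 1 ≤ Equiv.swap a b m ∧ Equiv.swap a b m ≤ n := by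
        intro m h1 h2; rw [Equiv.swap_apply_def]; split_ifs <;> omega
      have hord : Equiv.swap a b q.1 < Equiv.swap a b q.2 := by
        rw [Equiv.swap_apply_def, Equiv.swap_apply_def]; split_ifs <;> omega
      exact ⟨⟨hm q.1 hq1.1 hq1.2, hm q.2 hq2.1 hq2.2⟩, hord, h3⟩
  · intro q hq q' hq' heq
    simp only [Finset.coe_filter, Set.mem_setOf_eq, Finset.mem_product,
      Finset.mem_Icc] at hq hq'
    obtain ⟨⟨hq1, hq2⟩, hlt, hinv⟩ := hq
    obtain ⟨⟨hq1', hq2'⟩, hlt', hinv'⟩ := hq'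
    have hsw : ∀ m : ℕ, (m = a ∧ Equiv.swap a b m = b) ∨ (m = b ∧ Equiv.swap a b m = a) ∨
        (m ≠ a ∧ m ≠ b ∧ Equiv.swap a b m = m) := by
      intro m
      rcases eq_or_ne m a with rfl | h1
      · exact Or.inl ⟨rfl, Equiv.swap_apply_left _ _⟩
      rcases eq_or_ne m b with rfl | h2
      · exact Or.inr (Or.inl ⟨rfl, Equiv.swap_apply_right _ _⟩)
      · exact Or.inr (Or.inr ⟨h1, h2, Equiv.swap_apply_of_ne_of_ne h1 h2⟩)
    dsimp only at heq
    by_cases hc : (q.1 = a ∧ q.2 < b) ∨ (q.2 = b ∧ a < q.1) <;>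
      by_cases hc' : (q'.1 = a ∧ q'.2 < b) ∨ (q'.2 = b ∧ a < q'.1)
    · rw [if_pos hc, if_pos hc'] at heq
      exact heq
    · exfalso
      rw [if_pos hc, if_neg hc'] at heq
      rw [Prod.ext_iff] at heq
      obtain ⟨e1, e2⟩ := heq
      dsimp only at e1 e2
      rcases hsw q'.1 with ⟨u1, v1⟩ | ⟨u1, v1⟩ | ⟨u1, u1', v1⟩ <;>
        rcases hsw q'.2 with ⟨u2, v2⟩ | ⟨u2, v2⟩ | ⟨u2, u2', v2⟩ <;>
          rw [v1] at e1 <;> rw [v2] at e2 <;>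
            rcases hc with ⟨f1, f2⟩ | ⟨f1, f2⟩ <;> omega
    · exfalso
      rw [if_neg hc, if_pos hc'] at heq
      rw [Prod.ext_iff] at heq
      obtain ⟨e1, e2⟩ := heq
      dsimp only at e1 e2
      rcases hsw q.1 with ⟨u1, v1⟩ | ⟨u1, v1⟩ | ⟨u1, u1', v1⟩ <;>
        rcases hsw q.2 with ⟨u2, v2⟩ | ⟨u2, v2⟩ | ⟨u2, u2', v2⟩ <;>
          rw [v1] at e1 <;> rw [v2] at e2 <;>
            rcases hc' with ⟨f1, f2⟩ | ⟨f1, f2⟩ <;> omega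
    · rw [if_neg hc, if_neg hc'] at heq
      rw [Prod.ext_iff] at heq
      dsimp only at heq
      exact Prod.ext ((Equiv.swap a b).injective heq.1) ((Equiv.swap a b).injective heq.2)

lemma swap_rk {n : ℕ} {x y : ℕ → ℕ} (hx : IsPermOf n x) {a b : ℕ}
    (ha : a ∈ Finset.Icc 1 n) (hb : b ∈ Finset.Icc 1 n) (hab : a < b) (hv : x a < x b)
    (hy : ∀ k, y k = Equiv.swap (x a) (x b) (x k)) (P m : ℕ) :
    rk y P m ≤ rk x P m := by
  have hyc := swap_basic hx ha hb hy
  rw [Finset.mem_Icc] at ha hb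
  unfold rk
  rw [Finset.card_filter, Finset.card_filter]
  by_cases hP : b ≤ P
  · apply le_of_eq
    refine Finset.sum_equiv (Equiv.swap a b) ?_ ?_
    · intro k
      simp only [Finset.mem_Icc]
      rw [Equiv.swap_apply_def]; split_ifs <;> omega
    · intro k _
      rw [hyc k]
  · apply Finset.sum_le_sum
    intro k hk
    rw [Finset.mem_Icc] at hk
    have hkb : k ≠ b := by omega
    rcases eq_or_ne k a with rfl | hka
    · rw [hyc k, Equiv.swap_apply_left]
      split_ifs <;> omega
    · rw [hyc k, Equiv.swap_apply_of_ne_of_ne hka hkb]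

lemma bruhat_step_rk {n : ℕ} {x y : ℕ → ℕ} (hx : IsPermOf n x) (hst : BruhatStep n x y) :
    IsPermOf n y ∧ ∀ P m, rk y P m ≤ rk x P m := by
  obtain ⟨hlen, i, j, hi1, hij, hjn, hy⟩ := hst
  have hi : i ∈ Finset.Icc 1 n := Finset.mem_Icc.2 ⟨hi1, by omega⟩
  have hj : j ∈ Finset.Icc 1 n := Finset.mem_Icc.2 ⟨by omega, hjn⟩
  obtain ⟨a, ha, hxa⟩ := permOf_surj hx i hi
  obtain ⟨b, hbm, hxb⟩ := permOf_surj hx j hj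
  subst hxa; subst hxb
  have hyPerm : IsPermOf n y := by
    obtain ⟨h1, h2, h3⟩ := hx
    refine ⟨?_, ?_, ?_⟩
    · intro k hk
      rw [hy k, Equiv.swap_apply_def]
      split_ifs with e1 e2
      · exact h1 b hbm
      · exact h1 a ha
      · exact h1 k hk
    · intro k hk l hl hkl
      rw [hy k, hy l] at hkl
      exact h2 k hk l hl ((Equiv.swap _ _).injective hkl)
    · intro k hk
      rw [hy k, h3 k hk]
      refine Equiv.swap_apply_of_ne_of_ne (fun h => ?_) (fun h => ?_)
      · exact hk (h ▸ h1 a ha)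
      · exact hk (h ▸ h1 b hbm)
  have hne : a ≠ b := by intro h; rw [h] at hij; omega
  rcases lt_or_gt_of_ne hne with h | h
  · exact ⟨hyPerm, fun P m => swap_rk hx ha hbm h hij hy P m⟩
  · exfalso
    have hyc := swap_basic hx ha hbm hy
    have hyb : y b = x a := by rw [hyc b, Equiv.swap_apply_right]
    have hya : y a = x b := by rw [hyc a, Equiv.swap_apply_left]
    have hx' : ∀ k, x k = Equiv.swap (y b) (y a) (y k) := by
      intro k
      rw [hyb, hya, hy k, Equiv.swap_apply_self]
    have := swap_len hyPerm hbm ha h (by rw [hyb, hya]; exact hij) hx'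
    omega

lemma bruhat_rk {n : ℕ} {x y : ℕ → ℕ} (hx : IsPermOf n x) (h : BruhatLe n x y) :
    ∀ P m, rk y P m ≤ rk x P m := by
  have key : IsPermOf n y ∧ ∀ P m, rk y P m ≤ rk x P m := by
    induction h with
    | refl => exact ⟨hx, fun _ _ => le_rfl⟩
    | tail _ hbc ih =>
      obtain ⟨hbp, hrk⟩ := ih
      obtain ⟨hcp, hrk'⟩ := bruhat_step_rk hbp hbc
      exact ⟨hcp, fun P m => (hrk' P m).trans (hrk P m)⟩
  exact key.2

lemma rowT_def (p : ℕ → ℕ × ℕ) (k : ℕ) : rowT p k = (p k).1 := rfl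
lemma colT_def (p : ℕ → ℕ × ℕ) (k : ℕ) : colT p k = (p k).2 := rfl

lemma psum_le {n : ℕ} {lam : ℕ → ℕ} (hlam : IsComp n lam) (j : ℕ) : psum lam j ≤ n := by
  obtain ⟨h0, N, hN, hsum⟩ := hlam
  unfold psum at *
  rcases le_total j N with h | h
  · calc ∑ i ∈ Finset.Icc 1 j, lam i ≤ ∑ i ∈ Finset.Icc 1 N, lam i :=
        Finset.sum_le_sum_of_subset (Finset.Icc_subset_Icc_right h)
    _ = n := hsum
  · have hun : Finset.Icc 1 j = Finset.Icc 1 N ∪ Finset.Icc (N+1) j := by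
      ext x; simp only [Finset.mem_union, Finset.mem_Icc]; omega
    have hdisj : Disjoint (Finset.Icc 1 N) (Finset.Icc (N+1) j) := by
      rw [Finset.disjoint_left]
      intro x hx hx'
      simp only [Finset.mem_Icc] at hx hx'
      omega
    have hz : ∑ i ∈ Finset.Icc (N+1) j, lam i = 0 :=
      Finset.sum_eq_zero (fun i hi => hN i (by simp only [Finset.mem_Icc] at hi; omega))
    rw [hun, Finset.sum_union hdisj, hsum, hz]
    omega

lemma col_card {lam : ℕ → ℕ} {n : ℕ} {p : ℕ → ℕ × ℕ} (hp : IsTab lam n p)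
    {c : ℕ} (hc : 1 ≤ c) :
    ((Finset.Icc 1 n).filter (fun k => colT p k = c)).card = lam c := by
  obtain ⟨hbox, hinj, hsurj⟩ := hp
  simp only [zero_add] at hbox hinj hsurj
  have key : ((Finset.Icc 1 n).filter (fun k => colT p k = c)).card
      = (Finset.Icc 1 (lam c)).card := by
    apply Finset.card_bij (fun k _ => rowT p k)
    · intro k hk
      rw [Finset.mem_filter] at hk
      obtain ⟨hkm, hkc⟩ := hk
      obtain ⟨h1, h2, h3⟩ := hbox k hkm
      have h2' : 0 < (p k).1 := h2
      rw [colT_def] at hkc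
      rw [hkc] at h3
      rw [Finset.mem_Icc, rowT_def]
      omega
    · intro k hk l hl heq
      rw [Finset.mem_filter] at hk hl
      apply hinj k hk.1 l hl.1
      have hc2 : (p k).2 = (p l).2 := by
        rw [colT_def] at hk hl; rw [hk.2, hl.2]
      exact Prod.ext heq hc2
    · intro r hr
      rw [Finset.mem_Icc] at hr
      obtain ⟨k, hk, hpk⟩ := hsurj (r, c) hc (show 0 < r by omega) hr.2
      refine ⟨k, Finset.mem_filter.2 ⟨hk, ?_⟩, ?_⟩
      · rw [colT_def, hpk]
      · rw [rowT_def, hpk]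
  rw [key, Nat.card_Icc]
  omega

lemma colle_card {lam : ℕ → ℕ} {n : ℕ} {p : ℕ → ℕ × ℕ} (hp : IsTab lam n p) (j : ℕ) :
    ((Finset.Icc 1 n).filter (fun k => colT p k ≤ j)).card = psum lam j := by
  induction j with
  | zero =>
    have he : ((Finset.Icc 1 n).filter (fun k => colT p k ≤ 0)) = ∅ := by
      rw [Finset.filter_eq_empty_iff]
      intro k hk
      have h1 := (hp.1 k (by simp only [zero_add]; exact hk)).1
      rw [colT_def]
      omega
    rw [he]
    unfold psum
    simp
  | succ j ih =>
    have hsplit : ((Finset.Icc 1 n).filter (fun k => colT p k ≤ j + 1))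
        = ((Finset.Icc 1 n).filter (fun k => colT p k ≤ j))
          ∪ ((Finset.Icc 1 n).filter (fun k => colT p k = j + 1)) := by
      rw [← Finset.filter_or]
      apply Finset.filter_congr
      intro k _
      constructor
      · intro h; omega
      · intro h; omega
    have hdisj : Disjoint ((Finset.Icc 1 n).filter (fun k => colT p k ≤ j))
        ((Finset.Icc 1 n).filter (fun k => colT p k = j + 1)) := by
      rw [Finset.disjoint_left]
      intro x hx hx'
      rw [Finset.mem_filter] at hx hx'
      omega
    rw [hsplit, Finset.card_union_of_disjoint hdisj, ih, col_card hp (by omega)]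
    unfold psum
    rw [Finset.sum_Icc_succ_top (by omega : 1 ≤ j + 1)]

lemma col_mono {lam : ℕ → ℕ} {n : ℕ} {ptau : ℕ → ℕ × ℕ} (h : IsSuperstandard lam n ptau) :
    ∀ k l, 1 ≤ k → k ≤ l → l ≤ n → colT ptau k ≤ colT ptau l := by
  obtain ⟨_, _, hstep⟩ := h
  intro k l hk hkl hln
  induction l, hkl using Nat.le_induction with
  | base => exact le_rfl
  | succ m hm ih =>
    exact le_trans (ih (by omega)) (hstep m (by omega) (by omega))

lemma tau_col_iff {lam : ℕ → ℕ} {n : ℕ} {ptau : ℕ → ℕ × ℕ}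
    (h : IsSuperstandard lam n ptau) :
    ∀ k ∈ Finset.Icc 1 n, ∀ j, (colT ptau k ≤ j ↔ k ≤ psum lam j) := by
  intro k hk j
  have hcard := colle_card h.1 j
  have hmono := col_mono h
  rw [Finset.mem_Icc] at hk
  constructor
  · intro hcol
    have hsub : Finset.Icc 1 k ⊆ (Finset.Icc 1 n).filter (fun m => colT ptau m ≤ j) := by
      intro m hm
      rw [Finset.mem_Icc] at hm
      rw [Finset.mem_filter, Finset.mem_Icc]
      exact ⟨⟨hm.1, le_trans hm.2 hk.2⟩, le_trans (hmono m k hm.1 hm.2 hk.2) hcol⟩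
    have := Finset.card_le_card hsub
    rw [hcard, Nat.card_Icc] at this
    omega
  · intro hle
    by_contra hcol
    have hsub : (Finset.Icc 1 n).filter (fun m => colT ptau m ≤ j) ⊆ Finset.Icc 1 (k-1) := by
      intro m hm
      rw [Finset.mem_filter, Finset.mem_Icc] at hm
      rw [Finset.mem_Icc]
      refine ⟨hm.1.1, ?_⟩
      by_contra hmk
      exact hcol (le_trans (hmono k m hk.1 (by omega) hm.1.2) hm.2)
    have := Finset.card_le_card hsub
    rw [hcard, Nat.card_Icc] at this
    omega

lemma count_eq_rk {lam : ℕ → ℕ} {n : ℕ} (hlam : IsComp n lam)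
    {ptau pt : ℕ → ℕ × ℕ} {wt : ℕ → ℕ}
    (htau : IsSuperstandard lam n ptau) (hwt : IsPermTab n ptau pt wt)
    (m : ℕ) (hm : m ≤ n) (j : ℕ) :
    ((Finset.Icc 1 m).filter (fun x => colT pt x ≤ j)).card = rk wt (psum lam j) m := by
  obtain ⟨hperm, hpos⟩ := hwt
  have hPn : psum lam j ≤ n := psum_le hlam j
  have hiff := tau_col_iff htau
  unfold rk
  refine (Finset.card_bij (fun k _ => wt k) ?_ ?_ ?_).symm
  · intro k hk
    rw [Finset.mem_filter, Finset.mem_Icc] at hk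
    obtain ⟨⟨hk1, hkP⟩, hkm⟩ := hk
    have hkn : k ∈ Finset.Icc 1 n := Finset.mem_Icc.2 ⟨hk1, by omega⟩
    have hw1 := hperm.1 k hkn
    rw [Finset.mem_Icc] at hw1
    rw [Finset.mem_filter, Finset.mem_Icc]
    refine ⟨⟨hw1.1, hkm⟩, ?_⟩
    have : colT pt (wt k) = colT ptau k := by rw [colT_def, colT_def, hpos k hkn]
    rw [this]
    exact (hiff k hkn j).2 hkP
  · intro k hk l hl heq
    rw [Finset.mem_filter, Finset.mem_Icc] at hk hl
    exact hperm.2.1 k (Finset.mem_Icc.2 ⟨hk.1.1, by omega⟩)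
      l (Finset.mem_Icc.2 ⟨hl.1.1, by omega⟩) heq
  · intro x hx
    rw [Finset.mem_filter, Finset.mem_Icc] at hx
    obtain ⟨⟨hx1, hxm⟩, hxj⟩ := hx
    have hxn : x ∈ Finset.Icc 1 n := Finset.mem_Icc.2 ⟨hx1, by omega⟩
    obtain ⟨k, hkn, hwk⟩ := permOf_surj hperm x hxn
    have hcol : colT ptau k = colT pt x := by
      rw [colT_def, colT_def, ← hwk, hpos k hkn]
    have hkP : k ≤ psum lam j := (hiff k hkn j).1 (by rw [hcol]; exact hxj)
    refine ⟨k, ?_, hwk⟩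
    rw [Finset.mem_filter, Finset.mem_Icc]
    rw [Finset.mem_Icc] at hkn
    exact ⟨⟨hkn.1, hkP⟩, by rw [hwk]; exact hxm⟩

lemma row_eq_rank {lam : ℕ → ℕ} {n : ℕ} {p : ℕ → ℕ × ℕ} (hp : IsColStdTab lam n p)
    {k : ℕ} (hk : k ∈ Finset.Icc 1 n) :
    rowT p k = ((Finset.Icc 1 n).filter (fun l => colT p l = colT p k ∧ l ≤ k)).card := by
  obtain ⟨⟨hbox, hinj, hsurj⟩, hcs⟩ := hp
  unfold ColStd at hcs
  simp only [zero_add] at hbox hinj hsurj hcs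
  have hbk := hbox k hk
  have hbk1 : 0 < (p k).1 := hbk.2.1
  have key : ((Finset.Icc 1 n).filter (fun l => colT p l = colT p k ∧ l ≤ k)).card
      = (Finset.Icc 1 (rowT p k)).card := by
    apply Finset.card_bij (fun l _ => rowT p l)
    · intro l hl
      rw [Finset.mem_filter] at hl
      obtain ⟨hlm, hlc, hlk⟩ := hl
      have hbl1 : 0 < (p l).1 := (hbox l hlm).2.1
      rw [Finset.mem_Icc, rowT_def]
      refine ⟨by omega, ?_⟩
      by_contra hgt
      push_neg at hgt
      have := hcs k hk l hlm hlc.symm (by rw [rowT_def, rowT_def]; exact hgt)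
      omega
    · intro l hl l' hl' heq
      rw [Finset.mem_filter] at hl hl'
      apply hinj l hl.1 l' hl'.1
      have hc2 : (p l).2 = (p l').2 := by
        rw [colT_def] at hl hl'
        rw [hl.2.1, hl'.2.1]
      exact Prod.ext heq hc2
    · intro r hr
      rw [Finset.mem_Icc] at hr
      have hrlam : r ≤ lam (colT p k) := by
        rw [rowT_def] at hr
        rw [colT_def]
        exact le_trans hr.2 hbk.2.2
      obtain ⟨l, hlm, hpl⟩ := hsurj (r, colT p k) hbk.1 (show 0 < r by omega) hrlam
      have hcoll : colT p l = colT p k := by rw [colT_def, hpl]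
      have hrowl : rowT p l = r := by rw [rowT_def, hpl]
      refine ⟨l, Finset.mem_filter.2 ⟨hlm, hcoll, ?_⟩, hrowl⟩
      rcases lt_or_eq_of_le hr.2 with hlt | heq2
      · have := hcs l hlm k hk hcoll (by rw [hrowl]; exact hlt)
        omega
      · have hpeq : p l = p k := by
          rw [hpl, heq2]
          exact Prod.mk.eta
        exact le_of_eq (hinj l hlm k hk hpeq)
  rw [key, Nat.card_Icc]
  omega

lemma eq_of_col_eq {lam : ℕ → ℕ} {n : ℕ} {pu pt : ℕ → ℕ × ℕ}
    (hu : IsColStdTab lam n pu) (ht : IsColStdTab lam n pt)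
    (hcol : ∀ k ∈ Finset.Icc 1 n, colT pt k = colT pu k) :
    ∀ k ∈ Finset.Icc 1 n, pt k = pu k := by
  intro k hk
  have h1 := row_eq_rank ht hk
  have h2 := row_eq_rank hu hk
  have hrow : rowT pt k = rowT pu k := by
    rw [h1, h2]
    congr 1
    apply Finset.filter_congr
    intro l hl
    rw [hcol l hl, hcol k hk]
  exact Prod.ext hrow (hcol k hk)

end BrLex

open BrLex

/-- Bruhat comparability implies lexicographic comparability
for column standard tableaux of the same composition shape. -/
theorem bruhat_implies_lex (n : ℕ) (lam : ℕ → ℕ) (hlam : IsComp n lam)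
    (pu pt ptau : ℕ → ℕ × ℕ)
    (hu : IsColStdTab lam n pu) (ht : IsColStdTab lam n pt)
    (htau : IsSuperstandard lam n ptau)
    (wu wt : ℕ → ℕ)
    (hwu : IsPermTab n ptau pu wu) (hwt : IsPermTab n ptau pt wt)
    (hbr : BruhatLe n wu wt) :
    (∀ k ∈ Finset.Icc 1 n, pt k = pu k) ∨
      ∃ l, 1 ≤ l ∧ l ≤ n ∧ colT pt l < colT pu l ∧
        ∀ m, l < m → m ≤ n → colT pt m = colT pu m := by
  classical
  have hrk : ∀ P m, rk wt P m ≤ rk wu P m := bruhat_rk hwu.1 hbr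
  have hdom : ∀ m, m ≤ n → ∀ j,
      ((Finset.Icc 1 m).filter (fun x => colT pt x ≤ j)).card
        ≤ ((Finset.Icc 1 m).filter (fun x => colT pu x ≤ j)).card := by
    intro m hm j
    rw [count_eq_rk hlam htau hwt m hm j, count_eq_rk hlam htau hwu m hm j]
    exact hrk _ _
  by_cases hall : ∀ k ∈ Finset.Icc 1 n, colT pt k = colT pu k
  · exact Or.inl (eq_of_col_eq hu ht hall)
  right
  push_neg at hall
  have hDne : ((Finset.Icc 1 n).filter (fun m => colT pt m ≠ colT pu m)).Nonempty := by
    obtain ⟨k, hk, hne⟩ := hall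
    exact ⟨k, Finset.mem_filter.2 ⟨hk, hne⟩⟩
  obtain ⟨l, hlD, hlmax⟩ : ∃ l, l ∈ (Finset.Icc 1 n).filter (fun m => colT pt m ≠ colT pu m) ∧
      ∀ m ∈ (Finset.Icc 1 n).filter (fun m => colT pt m ≠ colT pu m), m ≤ l :=
    ⟨_, Finset.max'_mem _ hDne, fun m hm => Finset.le_max' _ m hm⟩
  rw [Finset.mem_filter, Finset.mem_Icc] at hlD
  obtain ⟨⟨hl1, hln⟩, hlne⟩ := hlD
  have htail : ∀ m, l < m → m ≤ n → colT pt m = colT pu m := by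
    intro m hlm hmn
    by_contra hne
    have := hlmax m (Finset.mem_filter.2 ⟨Finset.mem_Icc.2 ⟨by omega, hmn⟩, hne⟩)
    omega
  refine ⟨l, hl1, hln, ?_, htail⟩
  by_contra hge
  push_neg at hge
  have hgt : colT pu l < colT pt l := by omega
  have hIcc : Finset.Icc 1 n = Finset.Icc 1 l ∪ Finset.Ioc l n := by
    ext x; simp only [Finset.mem_union, Finset.mem_Icc, Finset.mem_Ioc]; omega
  have hsplit : ∀ q : ℕ → ℕ × ℕ,
      ((Finset.Icc 1 n).filter (fun x => colT q x ≤ colT pu l)).card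
        = ((Finset.Icc 1 l).filter (fun x => colT q x ≤ colT pu l)).card
          + ((Finset.Ioc l n).filter (fun x => colT q x ≤ colT pu l)).card := by
    intro q
    rw [hIcc, Finset.filter_union, Finset.card_union_of_disjoint]
    rw [Finset.disjoint_left]
    intro x hx hx'
    rw [Finset.mem_filter, Finset.mem_Icc] at hx
    rw [Finset.mem_filter, Finset.mem_Ioc] at hx'
    omega
  have htails : ((Finset.Ioc l n).filter (fun x => colT pt x ≤ colT pu l)).card
      = ((Finset.Ioc l n).filter (fun x => colT pu x ≤ colT pu l)).card := by
    congr 1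
    apply Finset.filter_congr
    intro x hx
    rw [Finset.mem_Ioc] at hx
    rw [htail x hx.1 hx.2]
  have e1 := hsplit pt
  have e2 := hsplit pu
  rw [colle_card ht.1 (colT pu l)] at e1
  rw [colle_card hu.1 (colT pu l)] at e2
  have hNl : ((Finset.Icc 1 l).filter (fun x => colT pt x ≤ colT pu l)).card
      = ((Finset.Icc 1 l).filter (fun x => colT pu x ≤ colT pu l)).card := by omega
  have hIns : Finset.Icc 1 l = insert l (Finset.Icc 1 (l-1)) := by
    ext x; simp only [Finset.mem_insert, Finset.mem_Icc]; omega
  have hTt : ((Finset.Icc 1 l).filter (fun x => colT pt x ≤ colT pu l)).card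
      = ((Finset.Icc 1 (l-1)).filter (fun x => colT pt x ≤ colT pu l)).card := by
    rw [hIns, Finset.filter_insert, if_neg (by omega : ¬ colT pt l ≤ colT pu l)]
  have hTu : ((Finset.Icc 1 l).filter (fun x => colT pu x ≤ colT pu l)).card
      = ((Finset.Icc 1 (l-1)).filter (fun x => colT pu x ≤ colT pu l)).card + 1 := by
    rw [hIns, Finset.filter_insert, if_pos (le_refl (colT pu l))]
    rw [Finset.card_insert_of_notMem]
    intro hmem
    rw [Finset.mem_filter, Finset.mem_Icc] at hmem
    omega
  have hd := hdom (l-1) (by omega) (colT pu l)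
  omega
end

section
/- Let μ, λ be partitions of n, u a standard μ-tableau, t a standard λ-tableau, and let η = shape(u with entry n removed) and θ = shape(t with entry n removed). If η ≤ θ in dominance order (with the convention that η ≤ θ means all partial sums of θ are at most those of η) and col_u(n) ≤ col_t(n), then μ ≤ λ in the dominance order. -/
lemma resShape_top (lam : ℕ → ℕ) (n : ℕ) (p : ℕ → ℕ × ℕ)
    (h : IsStd lam n p) (j : ℕ) (hj : 1 ≤ j) : resShape p n j = lam j := by
  obtain ⟨⟨hbox, hinj, hsurj⟩, -, -⟩ := h
  simp only [Nat.zero_add] at hbox hinj hsurj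
  unfold resShape
  rw [show lam j = (Finset.Icc 1 (lam j)).card by simp]
  apply Finset.card_bij (fun k _ => (p k).1)
  · intro k hk
    simp only [Finset.mem_filter] at hk
    obtain ⟨hk1, hk2⟩ := hk
    obtain ⟨h1, h2, h3⟩ := hbox k hk1
    simp only [colT] at hk2
    simp only [Finset.mem_Icc]
    exact ⟨h2, hk2 ▸ h3⟩
  · intro k hk l hl heq
    simp only [Finset.mem_filter] at hk hl
    simp only [colT] at hk hl
    exact hinj k hk.1 l hl.1 (Prod.ext heq (hk.2.trans hl.2.symm))
  · intro r hr
    simp only [Finset.mem_Icc] at hr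
    obtain ⟨k, hk, hpk⟩ := hsurj (r, j) hj hr.1 hr.2
    refine ⟨k, ?_, by rw [hpk]⟩
    rw [Finset.mem_filter]
    exact ⟨hk, by simp [colT, hpk]⟩

lemma psum_resShape_pred (lam : ℕ → ℕ) (n : ℕ) (p : ℕ → ℕ × ℕ)
    (h : IsStd lam n p) (hn : 1 ≤ n) (k : ℕ) :
    psum lam k = psum (fun j => resShape p (n-1) j) k
      + (if colT p n ≤ k then 1 else 0) := by
  have hcol1 : 1 ≤ colT p n := by
    obtain ⟨⟨hbox, -, -⟩, -, -⟩ := h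
    have := hbox n (by simp [Finset.mem_Icc, hn])
    exact this.1
  have hstep : ∀ j, resShape p n j
      = resShape p (n-1) j + (if colT p n = j then 1 else 0) := by
    intro j
    unfold resShape
    have : Finset.Icc 1 n = insert n (Finset.Icc 1 (n-1)) := by
      ext x
      simp only [Finset.mem_insert, Finset.mem_Icc]
      omega
    rw [this, Finset.filter_insert]
    by_cases hc : colT p n = j
    · rw [if_pos hc, Finset.card_insert_of_notMem (by simp [Finset.mem_Icc]; omega),
        if_pos hc]
    · rw [if_neg hc, if_neg hc]; omega
  have hres : ∀ j, 1 ≤ j → lam j = resShape p n j := by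
    intro j hj; exact (resShape_top lam n p h j hj).symm
  unfold psum
  have h1 : ∑ i ∈ Finset.Icc 1 k, lam i = ∑ i ∈ Finset.Icc 1 k, resShape p n i :=
    Finset.sum_congr rfl (fun i hi => hres i (Finset.mem_Icc.mp hi).1)
  rw [h1]
  have h2 : ∑ i ∈ Finset.Icc 1 k, resShape p n i
      = ∑ i ∈ Finset.Icc 1 k, (resShape p (n-1) i + (if colT p n = i then 1 else 0)) :=
    Finset.sum_congr rfl (fun i _ => hstep i)
  rw [h2, Finset.sum_add_distrib]
  congr 1
  rw [Finset.sum_ite_eq]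
  by_cases hck : colT p n ≤ k
  · rw [if_pos (by simp only [Finset.mem_Icc]; omega), if_pos hck]
  · rw [if_neg (by simp only [Finset.mem_Icc]; omega), if_neg hck]

/-- if the shapes after removing `n` are dominance-comparable and
`col_u(n) ≤ col_t(n)`, then `μ ≤ λ` in dominance order. -/
theorem dominance_of_shapes_from_restriction (n : ℕ) (mu lam : ℕ → ℕ)
    (hmu : IsPartition n mu) (hlam : IsPartition n lam)
    (pu pt : ℕ → ℕ × ℕ) (hu : IsStd mu n pu) (ht : IsStd lam n pt)
    (hshape : Dominates (fun j => resShape pt (n-1) j)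
      (fun j => resShape pu (n-1) j))
    (hcol : colT pu n ≤ colT pt n) :
    Dominates lam mu := by
  rcases Nat.eq_zero_or_pos n with hn | hn
  · -- n = 0: both partitions are identically zero
    subst hn
    have hz : ∀ (nu : ℕ → ℕ), IsPartition 0 nu → ∀ j, nu j = 0 := by
      rintro nu ⟨⟨h0, N, hN, hsum⟩, hmono⟩ j
      rcases Nat.eq_zero_or_pos j with hj | hj
      · rw [hj, h0]
      rcases le_or_gt j N with hjN | hjN
      · have : ∀ i ∈ Finset.Icc 1 N, nu i = 0 := by
          have := (Finset.sum_eq_zero_iff).mp hsum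
          exact this
        exact this j (Finset.mem_Icc.mpr ⟨hj, hjN⟩)
      · exact hN j hjN
    intro k
    unfold psum
    rw [Finset.sum_congr rfl (fun i _ => hz lam hlam i),
      Finset.sum_congr rfl (fun i _ => hz mu hmu i)]
  · intro k
    have hL := psum_resShape_pred lam n pt ht hn k
    have hM := psum_resShape_pred mu n pu hu hn k
    have hS := hshape k
    rw [hL, hM]
    by_cases hc : colT pt n ≤ k
    · rw [if_pos hc, if_pos (le_trans hcol hc)]
      exact Nat.add_le_add hS le_rfl
    · rw [if_neg hc]
      exact le_trans (by omega) (Nat.le_add_right _ _)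
end

section
/- Let μ, λ be partitions of n and (u,t), (v,x) ∈ STD(μ) × STD(λ). If (u,t) and (v,x) are paired dual Knuth equivalent, then u ≤ t in the extended dominance order if and only if v ≤ x. -/
/-- Number of entries `≤ m` lying in columns `1, …, K`. -/
def fcnt (p : ℕ → ℕ × ℕ) (m K : ℕ) : ℕ :=
  ((Finset.Icc 1 m).filter (fun l => colT p l ∈ Finset.Icc 1 K)).card

lemma psum_resShape (p : ℕ → ℕ × ℕ) (m K : ℕ) :
    psum (fun j => resShape p m j) K = fcnt p m K := by
  unfold psum resShape fcnt
  rw [Finset.card_eq_sum_card_fiberwise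
      (f := fun l => colT p l) (t := Finset.Icc 1 K)
      (s := (Finset.Icc 1 m).filter (fun l => colT p l ∈ Finset.Icc 1 K))
      (fun x hx => (Finset.mem_filter.mp hx).2)]
  apply Finset.sum_congr rfl
  intro j hj
  rw [Finset.filter_filter]
  have hset : Finset.filter (fun a => colT p a ∈ Finset.Icc 1 K ∧ colT p a = j) (Finset.Icc 1 m)
      = Finset.filter (fun a => colT p a = j) (Finset.Icc 1 m) := by
    ext l
    simp only [Finset.mem_filter]
    constructor
    · rintro ⟨hl, _, hc⟩
      exact ⟨hl, hc⟩
    · rintro ⟨hl, hc⟩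
      exact ⟨hl, hc ▸ hj, hc⟩
  rw [hset]

lemma fcnt_zero (p : ℕ → ℕ × ℕ) (K : ℕ) : fcnt p 0 K = 0 := by
  unfold fcnt
  rw [show Finset.Icc 1 0 = (∅ : Finset ℕ) from Finset.Icc_eq_empty (by omega)]
  simp

lemma fcnt_succ (p : ℕ → ℕ × ℕ) (m K : ℕ) :
    fcnt p (m+1) K = fcnt p m K + (if colT p (m+1) ∈ Finset.Icc 1 K then 1 else 0) := by
  unfold fcnt
  rw [Finset.card_filter, Finset.card_filter, Finset.sum_Icc_succ_top (by omega)]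

lemma swap_mem_Icc {k m l : ℕ} (hk : 1 ≤ k) (hm : k + 1 ≤ m)
    (hl : l ∈ Finset.Icc 1 m) : (Equiv.swap k (k+1)) l ∈ Finset.Icc 1 m := by
  rcases eq_or_ne l k with rfl | h1
  · rw [Equiv.swap_apply_left]; simp [Finset.mem_Icc]; omega
  rcases eq_or_ne l (k+1) with rfl | h2
  · rw [Equiv.swap_apply_right]; simp [Finset.mem_Icc]; omega
  · rw [Equiv.swap_apply_of_ne_of_ne h1 h2]; exact hl

lemma fcnt_swap_lt {k m K : ℕ} {pu pv : ℕ → ℕ × ℕ}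
    (hv : ∀ l, pv l = pu (Equiv.swap k (k+1) l)) (hm : m < k) :
    fcnt pv m K = fcnt pu m K := by
  unfold fcnt
  congr 1
  apply Finset.filter_congr
  intro l hl
  rw [Finset.mem_Icc] at hl
  have : pv l = pu l := by
    rw [hv l, Equiv.swap_apply_of_ne_of_ne (by omega) (by omega)]
  rw [show colT pv l = colT pu l from by unfold colT; rw [this]]

lemma fcnt_swap_gt {k m K : ℕ} {pu pv : ℕ → ℕ × ℕ}
    (hv : ∀ l, pv l = pu (Equiv.swap k (k+1) l)) (hk : 1 ≤ k) (hm : k + 1 ≤ m) :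
    fcnt pv m K = fcnt pu m K := by
  unfold fcnt
  apply Finset.card_bij' (fun l _ => (Equiv.swap k (k+1)) l) (fun l _ => (Equiv.swap k (k+1)) l)
  · intro l hl
    rw [Finset.mem_filter] at hl ⊢
    refine ⟨swap_mem_Icc hk hm hl.1, ?_⟩
    have : colT pu ((Equiv.swap k (k+1)) l) = colT pv l := by
      unfold colT; rw [hv l]
    rw [this]; exact hl.2
  · intro l hl
    rw [Finset.mem_filter] at hl ⊢
    refine ⟨swap_mem_Icc hk hm hl.1, ?_⟩
    have : colT pv ((Equiv.swap k (k+1)) l) = colT pu l := by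
      unfold colT; rw [hv _, Equiv.swap_apply_self]
    rw [this]; exact hl.2
  · intro l _; exact Equiv.swap_apply_self _ _ l
  · intro l _; exact Equiv.swap_apply_self _ _ l

lemma key_arith (K a b ct ct' cu cu' : ℕ) (h1 : 1 ≤ ct) (h2 : 1 ≤ cu)
    (h3 : ct < ct') (h4 : cu < cu') (hA : a ≤ b)
    (hB : a + (if ct ∈ Finset.Icc 1 K then 1 else 0) + (if ct' ∈ Finset.Icc 1 K then 1 else 0)
        ≤ b + (if cu ∈ Finset.Icc 1 K then 1 else 0) + (if cu' ∈ Finset.Icc 1 K then 1 else 0)) :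
    (a + (if ct' ∈ Finset.Icc 1 K then 1 else 0) ≤ b + (if cu' ∈ Finset.Icc 1 K then 1 else 0)) ∧
    (a + (if ct ∈ Finset.Icc 1 K then 1 else 0) ≤ b + (if cu ∈ Finset.Icc 1 K then 1 else 0)) := by
  simp only [Finset.mem_Icc] at *
  split_ifs at * <;> omega

lemma step_fcnt (n k : ℕ) (pu pt pv px : ℕ → ℕ × ℕ)
    (hk1 : 1 ≤ k) (hkn : k + 1 ≤ n)
    (hv : ∀ m, pv m = pu (Equiv.swap k (k+1) m))
    (hx : ∀ m, px m = pt (Equiv.swap k (k+1) m))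
    (hcu : 1 ≤ colT pu k) (hct : 1 ≤ colT pt k)
    (hau : colT pu k < colT pu (k+1)) (hat : colT pt k < colT pt (k+1)) :
    (∀ m ∈ Finset.Icc 1 n, ∀ K, fcnt pt m K ≤ fcnt pu m K) ↔
    (∀ m ∈ Finset.Icc 1 n, ∀ K, fcnt px m K ≤ fcnt pv m K) := by
  obtain ⟨j, rfl⟩ : ∃ j, k = j + 1 := ⟨k - 1, by omega⟩
  set k := j + 1
  have hvu : ∀ m, m ≠ k → ∀ K, fcnt pv m K = fcnt pu m K := by
    intro m hm K
    rcases Nat.lt_or_ge m k with h | h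
    · exact fcnt_swap_lt hv h
    · exact fcnt_swap_gt hv hk1 (by omega)
  have hxt : ∀ m, m ≠ k → ∀ K, fcnt px m K = fcnt pt m K := by
    intro m hm K
    rcases Nat.lt_or_ge m k with h | h
    · exact fcnt_swap_lt hx h
    · exact fcnt_swap_gt hx hk1 (by omega)
  have hcolv : colT pv k = colT pu (k+1) := by
    unfold colT; rw [hv k, Equiv.swap_apply_left]
  have hcolx : colT px k = colT pt (k+1) := by
    unfold colT; rw [hx k, Equiv.swap_apply_left]
  constructor
  · intro H m hm K
    rcases eq_or_ne m k with rfl | hne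
    · have hA : fcnt pt j K ≤ fcnt pu j K := by
        rcases Nat.eq_zero_or_pos j with rfl | hj
        · rw [fcnt_zero, fcnt_zero]
        · exact H j (by rw [Finset.mem_Icc]; omega) K
      have hB := H (k+1) (by rw [Finset.mem_Icc]; omega) K
      rw [fcnt_succ, fcnt_succ, fcnt_succ, fcnt_succ] at hB
      rw [fcnt_succ, fcnt_succ, hvu j (by omega), hxt j (by omega), hcolv, hcolx]
      exact (key_arith K (fcnt pt j K) (fcnt pu j K) _ _ _ _ hct hcu hat hau hA hB).1
    · rw [hvu m hne, hxt m hne]; exact H m hm K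
  · intro H m hm K
    rcases eq_or_ne m k with rfl | hne
    · have hA : fcnt pt j K ≤ fcnt pu j K := by
        rcases Nat.eq_zero_or_pos j with rfl | hj
        · rw [fcnt_zero, fcnt_zero]
        · have := H j (by rw [Finset.mem_Icc]; omega) K
          rwa [hvu j (by omega), hxt j (by omega)] at this
      have hB := H (k+1) (by rw [Finset.mem_Icc]; omega) K
      rw [hvu (k+1) (by omega), hxt (k+1) (by omega)] at hB
      rw [fcnt_succ, fcnt_succ, fcnt_succ, fcnt_succ] at hB
      rw [fcnt_succ, fcnt_succ]
      exact (key_arith K (fcnt pt j K) (fcnt pu j K) _ _ _ _ hct hcu hat hau hA hB).2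
    · have := H m hm K
      rwa [hvu m hne, hxt m hne] at this

lemma extDom_iff_fcnt (n : ℕ) (pu pt : ℕ → ℕ × ℕ) :
    ExtDomLe n pu pt ↔ ∀ m ∈ Finset.Icc 1 n, ∀ K, fcnt pt m K ≤ fcnt pu m K := by
  unfold ExtDomLe Dominates
  constructor
  · intro h m hm K
    have := h m hm K
    rwa [psum_resShape, psum_resShape] at this
  · intro h m hm K
    rw [psum_resShape, psum_resShape]
    exact h m hm K

lemma single_data {mu : ℕ → ℕ} {n k : ℕ} {pu pv : ℕ → ℕ × ℕ}
    (h : DKMove mu n pu pv k) :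
    1 ≤ k ∧ k + 1 ≤ n ∧ (∀ m, pv m = pu (Equiv.swap k (k+1) m)) ∧
    1 ≤ colT pu k ∧ colT pu k < colT pu (k+1) := by
  rcases h with ⟨hsu, hsv, hk2, hsw, _, hnd, hd, _⟩ | ⟨hsu, hsv, hk2, hsw, _, hnd, hd, _⟩ <;>
  · obtain ⟨hk1, hkn, _⟩ := hd
    have hk1' : 1 ≤ k := by omega
    have hkn' : k + 1 ≤ n := by omega
    refine ⟨hk1', hkn', hsw, ?_, ?_⟩
    · exact (hsu.1.1 k (by simp [Finset.mem_Icc]; omega)).1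
    · unfold inD at hnd
      push_neg at hnd
      exact hnd (by omega) (by omega)

lemma step_iff (mu lam : ℕ → ℕ) (n : ℕ) (a b : (ℕ → ℕ × ℕ) × (ℕ → ℕ × ℕ))
    (h : PairedDKMove mu lam n a b) :
    ExtDomLe n a.1 a.2 ↔ ExtDomLe n b.1 b.2 := by
  obtain ⟨k, hh⟩ := h
  have hd1 : DKMove mu n a.1 b.1 k := by
    rcases hh with ⟨h1, _⟩ | ⟨h1, _⟩
    exacts [Or.inl h1, Or.inr h1]
  have hd2 : DKMove lam n a.2 b.2 k := by
    rcases hh with ⟨_, h2⟩ | ⟨_, h2⟩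
    exacts [Or.inl h2, Or.inr h2]
  obtain ⟨hk1, hkn, hsw1, hc1, ha1⟩ := single_data hd1
  obtain ⟨_, _, hsw2, hc2, ha2⟩ := single_data hd2
  rw [extDom_iff_fcnt, extDom_iff_fcnt]
  exact step_fcnt n k a.1 a.2 b.1 b.2 hk1 hkn hsw1 hsw2 hc1 hc2 ha1 ha2

/-- paired dual Knuth equivalence preserves the extended
dominance order between the two components. -/
theorem pairedDK_preserves_extDom (n : ℕ) (mu lam : ℕ → ℕ)
    (hmu : IsPartition n mu) (hlam : IsPartition n lam)
    (pu pt pv px : ℕ → ℕ × ℕ)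
    (hu : IsStd mu n pu) (ht : IsStd lam n pt)
    (hv : IsStd mu n pv) (hx : IsStd lam n px)
    (heq : PairedDKEquiv mu lam n (pu, pt) (pv, px)) :
    ExtDomLe n pu pt ↔ ExtDomLe n pv px := by
  have main : ∀ a b, PairedDKEquiv mu lam n a b →
      (ExtDomLe n a.1 a.2 ↔ ExtDomLe n b.1 b.2) := by
    intro a b h
    induction h with
    | refl => exact Iff.rfl
    | tail _hR hstep ih =>
      refine ih.trans ?_
      rcases hstep with h | h
      · exact step_iff mu lam n _ _ h
      · exact (step_iff mu lam n _ _ h).symm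
  exact main (pu, pt) (pv, px) heq
end

section
/- Let μ, λ be partitions of n and (u,t), (v,x) ∈ STD(μ) × STD(λ) with (u,t) paired dual Knuth equivalent to (v,x). Then l(v) − l(u) = l(x) − l(t), where l(t) denotes the Coxeter length of the permutation perm(t) associated to the tableau t. Consequently, u ≤_L v in the left weak order if and only if t ≤_L x. -/
/-! ### Auxiliary machinery -/

section Aux

open Finset

/-- The inversion set of `w` on `[1,n]`. -/
def InvSet (n : ℕ) (w : ℕ → ℕ) : Finset (ℕ × ℕ) :=
  (Finset.Icc 1 n ×ˢ Finset.Icc 1 n).filter (fun q => q.1 < q.2 ∧ w q.2 < w q.1)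

lemma lenInv_eq_card (n : ℕ) (w : ℕ → ℕ) : lenInv n w = (InvSet n w).card := rfl

lemma swap_lt_iff (i c d : ℕ) (h1 : ¬(c = i ∧ d = i+1)) (h2 : ¬(c = i+1 ∧ d = i)) :
    Equiv.swap i (i+1) c < Equiv.swap i (i+1) d ↔ c < d := by
  simp only [Equiv.swap_apply_def]
  split_ifs <;> omega

lemma swap_mem_Icc_s6 {n i v : ℕ} (hi : 1 ≤ i) (hin : i + 1 ≤ n) (hv : v ∈ Finset.Icc 1 n) :
    Equiv.swap i (i+1) v ∈ Finset.Icc 1 n := by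
  simp only [Finset.mem_Icc] at *
  simp only [Equiv.swap_apply_def]
  split_ifs <;> omega

lemma isPermOf_exists_pos {n : ℕ} {w : ℕ → ℕ} (hw : IsPermOf n w) {m : ℕ}
    (hm : m ∈ Finset.Icc 1 n) : ∃ a ∈ Finset.Icc 1 n, w a = m := by
  obtain ⟨a, ha, h⟩ := Finset.surj_on_of_inj_on_of_card_le (s := Finset.Icc 1 n)
    (t := Finset.Icc 1 n) (f := fun a _ => w a) (fun a ha => hw.1 a ha)
    (fun a b ha hb h => hw.2.1 a ha b hb h) le_rfl m hm
  exact ⟨a, ha, h.symm⟩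

lemma isPermOf_surj {n : ℕ} {w : ℕ → ℕ} (hw : IsPermOf n w) (v : ℕ) : ∃ a, w a = v := by
  by_cases h : v ∈ Finset.Icc 1 n
  · obtain ⟨a, _, ha⟩ := isPermOf_exists_pos hw h; exact ⟨a, ha⟩
  · exact ⟨v, hw.2.2 v h⟩

lemma invSet_swap_insert {n i : ℕ} {x : ℕ → ℕ} (hx : IsPermOf n x)
    (hi : 1 ≤ i) (hin : i + 1 ≤ n) {a0 b0 : ℕ}
    (ha : a0 ∈ Finset.Icc 1 n) (hb : b0 ∈ Finset.Icc 1 n)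
    (hxa : x a0 = i) (hxb : x b0 = i + 1) (hab : a0 < b0) :
    InvSet n (fun v => Equiv.swap i (i+1) (x v)) = insert (a0, b0) (InvSet n x) ∧
      (a0, b0) ∉ InvSet n x := by
  constructor
  · ext ⟨a, b⟩
    simp only [InvSet, Finset.mem_insert, Finset.mem_filter, Finset.mem_product, Prod.mk.injEq]
    constructor
    · rintro ⟨⟨haI, hbI⟩, hab', hlt⟩
      by_cases hcase : a = a0 ∧ b = b0
      · exact Or.inl hcase
      · refine Or.inr ⟨⟨haI, hbI⟩, hab', ?_⟩
        rw [swap_lt_iff i (x b) (x a) ?_ ?_] at hlt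
        · exact hlt
        · rintro ⟨h1, h2⟩
          have hb' : b = a0 := hx.2.1 b hbI a0 ha (by rw [h1, hxa])
          have ha' : a = b0 := hx.2.1 a haI b0 hb (by rw [h2, hxb])
          omega
        · rintro ⟨h1, h2⟩
          have hb' : b = b0 := hx.2.1 b hbI b0 hb (by rw [h1, hxb])
          have ha' : a = a0 := hx.2.1 a haI a0 ha (by rw [h2, hxa])
          exact hcase ⟨ha', hb'⟩
    · rintro (⟨rfl, rfl⟩ | ⟨⟨haI, hbI⟩, hab', hlt⟩)
      · refine ⟨⟨ha, hb⟩, hab, ?_⟩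
        rw [hxa, hxb, Equiv.swap_apply_left, Equiv.swap_apply_right]; omega
      · refine ⟨⟨haI, hbI⟩, hab', ?_⟩
        rw [swap_lt_iff i (x b) (x a) ?_ ?_]
        · exact hlt
        · rintro ⟨h1, h2⟩
          have hb' : b = a0 := hx.2.1 b hbI a0 ha (by rw [h1, hxa])
          have ha' : a = b0 := hx.2.1 a haI b0 hb (by rw [h2, hxb])
          omega
        · rintro ⟨h1, h2⟩; omega
  · simp only [InvSet, Finset.mem_filter, Finset.mem_product]
    rintro ⟨-, -, h⟩
    rw [hxa, hxb] at h; omega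

lemma lenInv_swap_up {n i : ℕ} {x : ℕ → ℕ} (hx : IsPermOf n x)
    (hi : 1 ≤ i) (hin : i + 1 ≤ n) {a0 b0 : ℕ}
    (ha : a0 ∈ Finset.Icc 1 n) (hb : b0 ∈ Finset.Icc 1 n)
    (hxa : x a0 = i) (hxb : x b0 = i + 1) (hab : a0 < b0) :
    lenInv n (fun v => Equiv.swap i (i+1) (x v)) = lenInv n x + 1 := by
  obtain ⟨heq, hnot⟩ := invSet_swap_insert hx hi hin ha hb hxa hxb hab
  rw [lenInv_eq_card, lenInv_eq_card, heq, Finset.card_insert_of_notMem hnot]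

lemma isPermOf_swap {n i : ℕ} {x : ℕ → ℕ} (hx : IsPermOf n x) (hi : 1 ≤ i) (hin : i+1 ≤ n) :
    IsPermOf n (fun v => Equiv.swap i (i+1) (x v)) := by
  refine ⟨fun k hk => swap_mem_Icc_s6 hi hin (hx.1 k hk), ?_, ?_⟩
  · intro k hk l hl h
    exact hx.2.1 k hk l hl (Equiv.injective _ h)
  · intro k hk
    show Equiv.swap i (i+1) (x k) = k
    rw [hx.2.2 k hk]
    simp only [Finset.mem_Icc] at hk
    apply Equiv.swap_apply_of_ne_of_ne <;> omega

lemma lenInv_swap_pm {n i : ℕ} {x : ℕ → ℕ} (hx : IsPermOf n x) (hi : 1 ≤ i) (hin : i+1 ≤ n) :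
    lenInv n (fun v => Equiv.swap i (i+1) (x v)) = lenInv n x + 1 ∨
    lenInv n x = lenInv n (fun v => Equiv.swap i (i+1) (x v)) + 1 := by
  obtain ⟨a0, ha, hxa⟩ := isPermOf_exists_pos hx
    (show i ∈ Finset.Icc 1 n by simp only [Finset.mem_Icc]; omega)
  obtain ⟨b0, hb, hxb⟩ := isPermOf_exists_pos hx
    (show i+1 ∈ Finset.Icc 1 n by simp only [Finset.mem_Icc]; omega)
  rcases lt_trichotomy a0 b0 with h | h | h
  · exact Or.inl (lenInv_swap_up hx hi hin ha hb hxa hxb h)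
  · exfalso; rw [h, hxb] at hxa; omega
  · right
    set y := fun v => Equiv.swap i (i+1) (x v) with hy
    have hyp : IsPermOf n y := isPermOf_swap hx hi hin
    have hxy : x = fun v => Equiv.swap i (i+1) (y v) := by
      funext v; simp [hy, Equiv.swap_apply_self]
    have hya : y a0 = i + 1 := by simp [hy, hxa]
    have hyb : y b0 = i := by simp [hy, hxb]
    calc lenInv n x = lenInv n (fun v => Equiv.swap i (i+1) (y v)) := by rw [← hxy]
      _ = lenInv n y + 1 := lenInv_swap_up hyp hi hin hb ha hyb hya h

/-- Apply a list of adjacent transpositions (head applied last). -/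
def applySwaps : List ℕ → ℕ → ℕ
  | [], v => v
  | i :: L, v => Equiv.swap i (i+1) (applySwaps L v)

lemma isPermOf_applySwaps {n : ℕ} {x : ℕ → ℕ} (hx : IsPermOf n x) :
    ∀ L : List ℕ, (∀ i ∈ L, 1 ≤ i ∧ i + 1 ≤ n) → IsPermOf n (fun v => applySwaps L (x v))
  | [], _ => hx
  | i :: L, hL => by
    have h1 := isPermOf_applySwaps hx L (fun j hj => hL j (List.mem_cons_of_mem _ hj))
    have h2 := isPermOf_swap h1 (hL i (List.mem_cons_self)).1 (hL i (List.mem_cons_self)).2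
    exact h2

lemma lenInv_applySwaps_le {n : ℕ} {x : ℕ → ℕ} (hx : IsPermOf n x) :
    ∀ L : List ℕ, (∀ i ∈ L, 1 ≤ i ∧ i+1 ≤ n) →
      lenInv n (fun v => applySwaps L (x v)) ≤ lenInv n x + L.length
  | [], _ => le_refl _
  | i :: L, hL => by
    have hperm := isPermOf_applySwaps hx L (fun j hj => hL j (List.mem_cons_of_mem _ hj))
    have hpm := lenInv_swap_pm hperm (hL i (List.mem_cons_self)).1
      (hL i (List.mem_cons_self)).2
    have ih := lenInv_applySwaps_le hx L (fun j hj => hL j (List.mem_cons_of_mem _ hj))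
    beta_reduce at hpm
    simp only [applySwaps, List.length_cons]
    rcases hpm with h | h <;> omega

lemma weakLe_chain {n : ℕ} {x y : ℕ → ℕ} (hx : IsPermOf n x) (h : WeakLe n x y) :
    ∃ L : List ℕ, (∀ i ∈ L, 1 ≤ i ∧ i+1 ≤ n) ∧ (∀ v, y v = applySwaps L (x v)) ∧
      lenInv n y = lenInv n x + L.length := by
  induction h with
  | refl => exact ⟨[], by simp, fun v => rfl, by simp⟩
  | @tail b c hxb hbc ih =>
    obtain ⟨L, hL, hfun, hlen⟩ := ih
    obtain ⟨hlt, i, hi1, hin, hstep⟩ := hbc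
    refine ⟨i :: L, ?_, ?_, ?_⟩
    · intro j hj
      rcases List.mem_cons.mp hj with rfl | hj
      · exact ⟨hi1, hin⟩
      · exact hL j hj
    · intro v; rw [hstep v, hfun v]; rfl
    · have hb : b = fun v => applySwaps L (x v) := funext hfun
      have hbperm : IsPermOf n b := by rw [hb]; exact isPermOf_applySwaps hx L hL
      have hc : c = fun v => Equiv.swap i (i+1) (b v) := funext hstep
      have hpm := lenInv_swap_pm hbperm hi1 hin
      rw [← hc] at hpm
      simp only [List.length_cons]
      rcases hpm with h | h <;> omega

lemma weakLe_of_applySwaps {n : ℕ} :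
    ∀ (L : List ℕ) (x : ℕ → ℕ), IsPermOf n x → (∀ i ∈ L, 1 ≤ i ∧ i+1 ≤ n) →
      lenInv n (fun v => applySwaps L (x v)) = lenInv n x + L.length →
      WeakLe n x (fun v => applySwaps L (x v))
  | [], x, hx, _, _ => Relation.ReflTransGen.refl
  | i :: L, x, hx, hL, hlen => by
    have hL' := fun j hj => hL j (List.mem_cons_of_mem _ hj)
    have hi := hL i (List.mem_cons_self)
    have hperm := isPermOf_applySwaps hx L hL'
    have hbound := lenInv_applySwaps_le hx L hL'
    have hpm := lenInv_swap_pm hperm hi.1 hi.2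
    beta_reduce at hpm
    simp only [applySwaps, List.length_cons] at hlen ⊢
    have h1 : lenInv n (fun v => applySwaps L (x v)) = lenInv n x + L.length := by
      rcases hpm with h | h <;> omega
    have ih := weakLe_of_applySwaps L x hx hL' h1
    refine Relation.ReflTransGen.tail ih ⟨by omega, i, hi.1, hi.2, fun k => rfl⟩

lemma weak_transfer {n : ℕ} {x1 y1 x2 y2 : ℕ → ℕ} (σ : Equiv.Perm ℕ)
    (hx1 : IsPermOf n x1) (hx2 : IsPermOf n x2)
    (h1 : ∀ m, y1 m = σ (x1 m)) (h2 : ∀ m, y2 m = σ (x2 m))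
    (hd : (lenInv n y1 : ℤ) - lenInv n x1 = (lenInv n y2 : ℤ) - lenInv n x2)
    (hw : WeakLe n x1 y1) : WeakLe n x2 y2 := by
  obtain ⟨L, hL, hfun, hlen⟩ := weakLe_chain hx1 hw
  have hσ : ∀ v, σ v = applySwaps L v := by
    intro v
    obtain ⟨a, ha⟩ := isPermOf_surj hx1 v
    rw [← ha, ← h1 a, hfun a]
  have hy2 : y2 = fun v => applySwaps L (x2 v) := by
    funext v; rw [h2 v, hσ]
  have hlen2 : lenInv n y2 = lenInv n x2 + L.length := by omega
  rw [hy2] at hlen2 ⊢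
  exact weakLe_of_applySwaps L x2 hx2 hL hlen2

/-! ### Tableaux and permutations -/

lemma superstandard_col_mono {lam : ℕ → ℕ} {n : ℕ} {ptau : ℕ → ℕ × ℕ}
    (h : IsSuperstandard lam n ptau) {a : ℕ} (ha : 1 ≤ a) :
    ∀ b, a ≤ b → b ≤ n → colT ptau a ≤ colT ptau b
  | 0, hab, _ => by omega
  | (m+1), hab, hb => by
    rcases Nat.lt_or_ge a (m+1) with hlt | hge
    · have h1 := superstandard_col_mono h ha m (by omega) (by omega)
      have h2 := h.2.2 m (by omega) hb
      omega
    · have hamb : a = m+1 := by omega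
      rw [hamb]

lemma isStd_inj {lam : ℕ → ℕ} {n : ℕ} {p : ℕ → ℕ × ℕ} (h : IsStd lam n p) :
    ∀ k ∈ Finset.Icc 1 n, ∀ l ∈ Finset.Icc 1 n, p k = p l → k = l := by
  have := h.1.2.1
  simpa using this

lemma permTab_unique {n : ℕ} {ptau p : ℕ → ℕ × ℕ}
    (hp : ∀ k ∈ Finset.Icc 1 n, ∀ l ∈ Finset.Icc 1 n, p k = p l → k = l)
    {w w' : ℕ → ℕ} (hw : IsPermTab n ptau p w) (hw' : IsPermTab n ptau p w') : w = w' := by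
  funext k
  by_cases hk : k ∈ Finset.Icc 1 n
  · exact hp _ (hw.1.1 k hk) _ (hw'.1.1 k hk) (by rw [hw.2 k hk, hw'.2 k hk])
  · rw [hw.1.2.2 k hk, hw'.1.2.2 k hk]

lemma exists_permTab {lam : ℕ → ℕ} {n : ℕ} {ptau p : ℕ → ℕ × ℕ}
    (htau : IsSuperstandard lam n ptau) (hp : IsStd lam n p) :
    ∃ w, IsPermTab n ptau p w := by
  classical
  have hbox : ∀ k ∈ Finset.Icc 1 n, ∃ e ∈ Finset.Icc 1 n, p e = ptau k := by
    intro k hk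
    have hk' : k ∈ Finset.Icc (0+1) (0+n) := by simpa using hk
    have hb := htau.1.1 k hk'
    have hsurj := hp.1.2.2 (ptau k) hb.1 hb.2.1 hb.2.2
    simpa using hsurj
  choose f hf1 hf2 using hbox
  refine ⟨fun k => if hk : k ∈ Finset.Icc 1 n then f k hk else k, ⟨⟨?_, ?_, ?_⟩, ?_⟩⟩
  · intro k hk; beta_reduce; rw [dif_pos hk]; exact hf1 k hk
  · intro k hk l hl h
    beta_reduce at h
    rw [dif_pos hk, dif_pos hl] at h
    have hpt : ptau k = ptau l := by rw [← hf2 k hk, ← hf2 l hl, h]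
    have htinj : ∀ a ∈ Finset.Icc 1 n, ∀ b ∈ Finset.Icc 1 n, ptau a = ptau b → a = b := by
      have := htau.1.2.1; simpa using this
    exact htinj k hk l hl hpt
  · intro k hk; beta_reduce; rw [dif_neg hk]
  · intro k hk; beta_reduce; rw [dif_pos hk]; exact hf2 k hk

lemma dk_step {lam : ℕ → ℕ} {n : ℕ} {ptau pa pb : ℕ → ℕ × ℕ} {wa wb : ℕ → ℕ} {k : ℕ}
    (htau : IsSuperstandard lam n ptau)
    (hmove : DK1 lam n pa pb k ∨ DK2 lam n pa pb k)
    (hwa : IsPermTab n ptau pa wa) (hwb : IsPermTab n ptau pb wb) :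
    (∀ m, wb m = Equiv.swap k (k+1) (wa m)) ∧ lenInv n wb = lenInv n wa + 1 := by
  obtain ⟨hsa, hsb, hk1, hkn, hswap, hcol⟩ :
      IsStd lam n pa ∧ IsStd lam n pb ∧ 1 ≤ k ∧ k + 1 ≤ n ∧
      (∀ m, pb m = pa (Equiv.swap k (k+1) m)) ∧ colT pa k < colT pa (k+1) := by
    rcases hmove with ⟨hsa, hsb, hk2, hsw, hdu, hndu, hdt, hndt⟩ |
      ⟨hsa, hsb, hk2, hsw, hdu, hndu, hdt, hndt⟩
    · have hkn : k + 1 ≤ n := by have := hdt.2.1; omega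
      refine ⟨hsa, hsb, by omega, hkn, hsw, ?_⟩
      by_contra hle
      exact hndu ⟨by omega, by omega, by omega⟩
    · have hk1 : 1 ≤ k := by have := hdt.1; omega
      refine ⟨hsa, hsb, hk1, by omega, hsw, ?_⟩
      by_contra hle
      exact hndu ⟨by omega, by omega, by omega⟩
  have hstep : ∀ m, wb m = Equiv.swap k (k+1) (wa m) := by
    intro m
    by_cases hm : m ∈ Finset.Icc 1 n
    · have e1 : pb (wb m) = ptau m := hwb.2 m hm
      have e2 : pa (wa m) = ptau m := hwa.2 m hm
      rw [hswap (wb m)] at e1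
      have hmem : Equiv.swap k (k+1) (wb m) ∈ Finset.Icc 1 n :=
        swap_mem_Icc_s6 hk1 hkn (hwb.1.1 m hm)
      have heq := isStd_inj hsa _ hmem _ (hwa.1.1 m hm) (by rw [e1, e2])
      have heq2 := congrArg (Equiv.swap k (k+1)) heq
      rwa [Equiv.swap_apply_self] at heq2
    · rw [hwb.1.2.2 m hm, hwa.1.2.2 m hm, Equiv.swap_apply_of_ne_of_ne]
      · simp only [Finset.mem_Icc] at hm; omega
      · simp only [Finset.mem_Icc] at hm; omega
  refine ⟨hstep, ?_⟩
  have hk : k ∈ Finset.Icc 1 n := by simp only [Finset.mem_Icc]; omega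
  have hk' : k + 1 ∈ Finset.Icc 1 n := by simp only [Finset.mem_Icc]; omega
  obtain ⟨a0, ha0, hwa0⟩ := isPermOf_exists_pos hwa.1 hk
  obtain ⟨b0, hb0, hwb0⟩ := isPermOf_exists_pos hwa.1 hk'
  have hpa : pa k = ptau a0 := by rw [← hwa0]; exact hwa.2 a0 ha0
  have hpb : pa (k+1) = ptau b0 := by rw [← hwb0]; exact hwa.2 b0 hb0
  have hcc : colT ptau a0 < colT ptau b0 := by
    unfold colT
    rw [← hpa, ← hpb]
    exact hcol
  have hab : a0 < b0 := by
    by_contra hba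
    simp only [Finset.mem_Icc] at ha0 hb0
    have := superstandard_col_mono htau (by omega : 1 ≤ b0) a0 (by omega) (by omega)
    omega
  have hup := lenInv_swap_up hwa.1 hk1 hkn ha0 hb0 hwa0 hwb0 hab
  have hwbf : wb = fun v => Equiv.swap k (k+1) (wa v) := funext hstep
  rw [hwbf]
  exact hup

end Aux

/-- a paired dual Knuth equivalence changes the Coxeter lengths
of the two components by the same amount; consequently it preserves the left
weak order between the two components. -/
theorem pairedDK_preserves_length_difference_and_weak_order
    (n : ℕ) (mu lam : ℕ → ℕ)
    (hmu : IsPartition n mu) (hlam : IsPartition n lam)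
    (pu pt pv px ptauMu ptauLam : ℕ → ℕ × ℕ)
    (hu : IsStd mu n pu) (ht : IsStd lam n pt)
    (hv : IsStd mu n pv) (hx : IsStd lam n px)
    (htauMu : IsSuperstandard mu n ptauMu)
    (htauLam : IsSuperstandard lam n ptauLam)
    (wu wv wt wx : ℕ → ℕ)
    (hwu : IsPermTab n ptauMu pu wu) (hwv : IsPermTab n ptauMu pv wv)
    (hwt : IsPermTab n ptauLam pt wt) (hwx : IsPermTab n ptauLam px wx)
    (heq : PairedDKEquiv mu lam n (pu, pt) (pv, px)) :
    ((lenInv n wv : ℤ) - lenInv n wu = (lenInv n wx : ℤ) - lenInv n wt) ∧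
      (WeakLe n wu wv ↔ WeakLe n wt wx) := by
  have aux : ∀ b : (ℕ → ℕ × ℕ) × (ℕ → ℕ × ℕ),
      PairedDKEquiv mu lam n (pu, pt) b →
      IsStd mu n b.1 ∧ IsStd lam n b.2 ∧
      ∀ wb1 wb2, IsPermTab n ptauMu b.1 wb1 → IsPermTab n ptauLam b.2 wb2 →
        ∃ σ : Equiv.Perm ℕ, (∀ m, wb1 m = σ (wu m)) ∧ (∀ m, wb2 m = σ (wt m)) ∧
          ((lenInv n wb1 : ℤ) - lenInv n wu = (lenInv n wb2 : ℤ) - lenInv n wt) := by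
    intro b hb
    induction hb with
    | refl =>
      refine ⟨hu, ht, fun wb1 wb2 hwb1 hwb2 => ⟨Equiv.refl ℕ, ?_, ?_, ?_⟩⟩
      · have h := permTab_unique (isStd_inj hu) hwb1 hwu
        intro m; rw [h]; rfl
      · have h := permTab_unique (isStd_inj ht) hwb2 hwt
        intro m; rw [h]; rfl
      · have e1 := permTab_unique (isStd_inj hu) hwb1 hwu
        have e2 := permTab_unique (isStd_inj ht) hwb2 hwt
        rw [e1, e2]; ring
    | @tail b c hab hbc ih =>
      obtain ⟨hb1, hb2, hIH⟩ := ih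
      have hcstd : IsStd mu n c.1 ∧ IsStd lam n c.2 := by
        rcases hbc with ⟨k, (⟨h1, h2⟩ | ⟨h1, h2⟩)⟩ | ⟨k, (⟨h1, h2⟩ | ⟨h1, h2⟩)⟩
        · exact ⟨h1.2.1, h2.2.1⟩
        · exact ⟨h1.2.1, h2.2.1⟩
        · exact ⟨h1.1, h2.1⟩
        · exact ⟨h1.1, h2.1⟩
      refine ⟨hcstd.1, hcstd.2, ?_⟩
      intro wc1 wc2 hwc1 hwc2
      obtain ⟨wb1, hwb1⟩ := exists_permTab htauMu hb1
      obtain ⟨wb2, hwb2⟩ := exists_permTab htauLam hb2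
      obtain ⟨σ, hσ1, hσ2, hσΔ⟩ := hIH wb1 wb2 hwb1 hwb2
      rcases hbc with ⟨k, hkk⟩ | ⟨k, hkk⟩
      · -- forward move b → c
        have m1 : (∀ m, wc1 m = Equiv.swap k (k+1) (wb1 m)) ∧
            lenInv n wc1 = lenInv n wb1 + 1 := by
          rcases hkk with ⟨h1, _⟩ | ⟨h1, _⟩
          · exact dk_step htauMu (Or.inl h1) hwb1 hwc1
          · exact dk_step htauMu (Or.inr h1) hwb1 hwc1
        have m2 : (∀ m, wc2 m = Equiv.swap k (k+1) (wb2 m)) ∧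
            lenInv n wc2 = lenInv n wb2 + 1 := by
          rcases hkk with ⟨_, h2⟩ | ⟨_, h2⟩
          · exact dk_step htauLam (Or.inl h2) hwb2 hwc2
          · exact dk_step htauLam (Or.inr h2) hwb2 hwc2
        refine ⟨σ.trans (Equiv.swap k (k+1)), ?_, ?_, ?_⟩
        · intro m; rw [m1.1 m, hσ1 m]; rfl
        · intro m; rw [m2.1 m, hσ2 m]; rfl
        · have e1 := m1.2; have e2 := m2.2; omega
      · -- backward move c → b
        have m1 : (∀ m, wb1 m = Equiv.swap k (k+1) (wc1 m)) ∧
            lenInv n wb1 = lenInv n wc1 + 1 := by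
          rcases hkk with ⟨h1, _⟩ | ⟨h1, _⟩
          · exact dk_step htauMu (Or.inl h1) hwc1 hwb1
          · exact dk_step htauMu (Or.inr h1) hwc1 hwb1
        have m2 : (∀ m, wb2 m = Equiv.swap k (k+1) (wc2 m)) ∧
            lenInv n wb2 = lenInv n wc2 + 1 := by
          rcases hkk with ⟨_, h2⟩ | ⟨_, h2⟩
          · exact dk_step htauLam (Or.inl h2) hwc2 hwb2
          · exact dk_step htauLam (Or.inr h2) hwc2 hwb2
        refine ⟨σ.trans (Equiv.swap k (k+1)), ?_, ?_, ?_⟩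
        · intro m
          have h := congrArg (Equiv.swap k (k+1)) (m1.1 m)
          rw [Equiv.swap_apply_self] at h
          rw [← h, hσ1 m]; rfl
        · intro m
          have h := congrArg (Equiv.swap k (k+1)) (m2.1 m)
          rw [Equiv.swap_apply_self] at h
          rw [← h, hσ2 m]; rfl
        · have e1 := m1.2; have e2 := m2.2; omega
  obtain ⟨-, -, hIH⟩ := aux (pv, px) heq
  obtain ⟨σ, hσ1, hσ2, hΔ⟩ := hIH wv wx hwv hwx
  refine ⟨hΔ, ?_, ?_⟩
  · exact fun h => weak_transfer σ hwu.1 hwt.1 hσ1 hσ2 hΔ h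
  · exact fun h => weak_transfer σ hwt.1 hwu.1 hσ2 hσ1 hΔ.symm h
end

section
/- Let λ be a partition of n, t a standard λ-tableau, and j a strong descent of t with j − 1 an ascent of t and col_t(j+1) < col_t(j−1). Set v = s_j t and w = s_{j−1} v. Then j − 1 is a strong descent of v, w is standard, j − 1 ∈ D(v), j ∉ D(v), j − 1 ∉ D(w), and j ∉ D(w). Furthermore, if j is a strong ascent of w, then j − 1 is a strong ascent of s_j w, with j ∈ D(s_j w), j − 1 ∉ D(s_j w), j − 1 ∈ D(s_{j−1} s_j w), and j ∉ D(s_{j−1} s_j w). -/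
lemma swap_lt_aux (k a b : ℕ) (h : Equiv.swap k (k+1) a < Equiv.swap k (k+1) b) :
    a < b ∨ (a = k + 1 ∧ b = k) := by
  simp only [Equiv.swap_apply_def] at h
  split_ifs at h <;> omega

lemma row_lt_of_sd (lam : ℕ → ℕ) (n : ℕ) (p : ℕ → ℕ × ℕ) (hp : IsStd lam n p)
    (k : ℕ) (hk1 : 1 ≤ k) (hk2 : k + 1 ≤ n) (hcol : colT p (k+1) < colT p k) :
    rowT p k < rowT p (k+1) := by
  obtain ⟨⟨hbox, hinj, hsurj⟩, hc, hr⟩ := hp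
  have hk : k ∈ Finset.Icc (0+1) (0+n) := by simp only [Finset.mem_Icc]; omega
  have hk' : k+1 ∈ Finset.Icc (0+1) (0+n) := by simp only [Finset.mem_Icc]; omega
  by_contra hcon
  push_neg at hcon
  have hb1 := hbox k hk
  have hb2 := hbox (k+1) hk'
  obtain ⟨m, hm, hpm⟩ := hsurj (rowT p (k+1), colT p k)
    (by simp only [colT] at hcol ⊢; omega)
    (by simpa [rowT] using hb2.2.1)
    (le_trans hcon hb1.2.2)
  have hmrow : rowT p m = rowT p (k+1) := by simp [rowT, hpm]
  have hmcol : colT p m = colT p k := by simp [colT, hpm]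
  have h1 : k + 1 < m := hr (k+1) hk' m hm hmrow.symm (by rw [hmcol]; exact hcol)
  rcases lt_or_eq_of_le hcon with hlt | heq
  · have := hc m hm k hk hmcol (by rw [hmrow]; exact hlt)
    omega
  · have hpk : p m = p k := by rw [hpm, heq]; rfl
    have := hinj m hm k hk hpk
    omega

lemma swap_std_aux (lam : ℕ → ℕ) (n : ℕ) (p q : ℕ → ℕ × ℕ)
    (hp : IsStd lam n p) (k : ℕ) (hk1 : 1 ≤ k) (hk2 : k + 1 ≤ n)
    (hcol : colT p (k+1) < colT p k)
    (hq : ∀ m, q m = p (Equiv.swap k (k+1) m)) : IsStd lam n q := by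
  have hrow : rowT p k < rowT p (k+1) := row_lt_of_sd lam n p hp k hk1 hk2 hcol
  obtain ⟨⟨hbox, hinj, hsurj⟩, hc, hr⟩ := hp
  have hmemσ : ∀ m ∈ Finset.Icc (0+1) (0+n),
      Equiv.swap k (k+1) m ∈ Finset.Icc (0+1) (0+n) := by
    intro m hm
    simp only [Finset.mem_Icc] at hm ⊢
    rcases eq_or_ne m k with rfl | h1
    · rw [Equiv.swap_apply_left]; omega
    rcases eq_or_ne m (k+1) with rfl | h2
    · rw [Equiv.swap_apply_right]; omega
    · rw [Equiv.swap_apply_of_ne_of_ne h1 h2]; omega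
  refine ⟨⟨?_, ?_, ?_⟩, ?_, ?_⟩
  · intro m hm; rw [hq]; exact hbox _ (hmemσ m hm)
  · intro a ha b hb hab
    rw [hq, hq] at hab
    have := hinj _ (hmemσ a ha) _ (hmemσ b hb) hab
    exact (Equiv.swap k (k+1)).injective this
  · intro c h1 h2 h3
    obtain ⟨m, hm, hpm⟩ := hsurj c h1 h2 h3
    exact ⟨Equiv.swap k (k+1) m, hmemσ m hm, by rw [hq, Equiv.swap_apply_self, hpm]⟩
  · intro a ha b hb hcab hrab
    have hcols : colT p (Equiv.swap k (k+1) a) = colT p (Equiv.swap k (k+1) b) := by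
      simpa [colT, hq] using hcab
    have hrows : rowT p (Equiv.swap k (k+1) a) < rowT p (Equiv.swap k (k+1) b) := by
      simpa [rowT, hq] using hrab
    have hlt := hc _ (hmemσ a ha) _ (hmemσ b hb) hcols hrows
    rcases swap_lt_aux k a b hlt with h | ⟨rfl, rfl⟩
    · exact h
    · rw [Equiv.swap_apply_left, Equiv.swap_apply_right] at hcols
      omega
  · intro a ha b hb hrab hcab
    have hrows : rowT p (Equiv.swap k (k+1) a) = rowT p (Equiv.swap k (k+1) b) := by
      simpa [rowT, hq] using hrab
    have hcols : colT p (Equiv.swap k (k+1) a) < colT p (Equiv.swap k (k+1) b) := by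
      simpa [colT, hq] using hcab
    have hlt := hr _ (hmemσ a ha) _ (hmemσ b hb) hrows hcols
    rcases swap_lt_aux k a b hlt with h | ⟨rfl, rfl⟩
    · exact h
    · rw [Equiv.swap_apply_left, Equiv.swap_apply_right] at hrows
      omega

/-- descent behaviour in the case `i = j-1` with
`col_t(j+1) < col_t(j-1)`. -/
theorem descents_after_swap_adjacent (n : ℕ) (lam : ℕ → ℕ)
    (hlam : IsPartition n lam)
    (pt pv pw : ℕ → ℕ × ℕ) (ht : IsStd lam n pt)
    (j : ℕ) (hjSD : inSD 0 n pt j) (hA : inA 0 n pt (j-1))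
    (hcol : colT pt (j+1) < colT pt (j-1))
    (hv : ∀ m, pv m = pt (Equiv.swap j (j+1) m))
    (hw : ∀ m, pw m = pv (Equiv.swap (j-1) j m)) :
    inSD 0 n pv (j-1) ∧ IsStd lam n pw ∧
    inD 0 n pv (j-1) ∧ ¬ inD 0 n pv j ∧
    ¬ inD 0 n pw (j-1) ∧ ¬ inD 0 n pw j ∧
      ∀ pz, (∀ m, pz m = pw (Equiv.swap j (j+1) m)) → inSA 0 n pw j →
        inSA 0 n pz (j-1) ∧ inD 0 n pz j ∧ ¬ inD 0 n pz (j-1) ∧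
          ∀ pz2, (∀ m, pz2 m = pz (Equiv.swap (j-1) j m)) →
            inD 0 n pz2 (j-1) ∧ ¬ inD 0 n pz2 j := by
  have hj2 : 2 ≤ j := by have := hA.1; omega
  have hj1 : j - 1 + 1 = j := by omega
  have hjn : j + 1 ≤ n := by have := hjSD.2.1; omega
  have hSDc : colT pt (j+1) < colT pt j := hjSD.2.2
  have hAc : colT pt (j-1) < colT pt j := by have := hA.2.2; rwa [hj1] at this
  -- values of pv
  have e1 : pv (j-1) = pt (j-1) := by
    rw [hv, Equiv.swap_apply_of_ne_of_ne (by omega) (by omega)]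
  have e2 : pv j = pt (j+1) := by rw [hv, Equiv.swap_apply_left]
  have e3 : pv (j+1) = pt j := by rw [hv, Equiv.swap_apply_right]
  -- values of pw
  have f1 : pw (j-1) = pt (j+1) := by rw [hw, Equiv.swap_apply_left, e2]
  have f2 : pw j = pt (j-1) := by rw [hw, Equiv.swap_apply_right, e1]
  have f3 : pw (j+1) = pt j := by
    rw [hw, Equiv.swap_apply_of_ne_of_ne (by omega) (by omega), e3]
  have hSDv : inSD 0 n pv (j-1) := by
    refine ⟨by omega, by omega, ?_⟩
    rw [hj1]
    show (pv j).2 < (pv (j-1)).2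
    rw [e1, e2]; exact hcol
  have hstdv : IsStd lam n pv :=
    swap_std_aux lam n pt pv ht j (by omega) hjn hSDc hv
  have hstdw : IsStd lam n pw := by
    refine swap_std_aux lam n pv pw hstdv (j-1) (by omega) (by omega) hSDv.2.2 ?_
    intro m; rw [hj1]; exact hw m
  refine ⟨hSDv, hstdw, ⟨by omega, by omega, le_of_lt hSDv.2.2⟩, ?_, ?_, ?_, ?_⟩
  · intro h
    have h3 : (pv (j+1)).2 ≤ (pv j).2 := h.2.2
    rw [e2, e3] at h3
    exact absurd h3 (not_le.mpr hSDc)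
  · intro h
    have h3 : (pw (j-1+1)).2 ≤ (pw (j-1)).2 := h.2.2
    rw [hj1, f1, f2] at h3
    exact absurd h3 (not_le.mpr hcol)
  · intro h
    have h3 : (pw (j+1)).2 ≤ (pw j).2 := h.2.2
    rw [f2, f3] at h3
    exact absurd h3 (not_le.mpr hAc)
  · intro pz hz _
    have g1 : pz (j-1) = pt (j+1) := by
      rw [hz, Equiv.swap_apply_of_ne_of_ne (by omega) (by omega), f1]
    have g2 : pz j = pt j := by rw [hz, Equiv.swap_apply_left, f3]
    have g3 : pz (j+1) = pt (j-1) := by rw [hz, Equiv.swap_apply_right, f2]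
    have hrowlt : rowT pt j < rowT pt (j+1) :=
      row_lt_of_sd lam n pt ht j (by omega) hjn hSDc
    refine ⟨⟨by omega, by omega, ?_⟩, ⟨by omega, by omega, ?_⟩, ?_, ?_⟩
    · rw [hj1]
      show (pz j).1 < (pz (j-1)).1
      rw [g1, g2]; exact hrowlt
    · show (pz (j+1)).2 ≤ (pz j).2
      rw [g2, g3]; exact le_of_lt hAc
    · intro h
      have h3 : (pz (j-1+1)).2 ≤ (pz (j-1)).2 := h.2.2
      rw [hj1, g1, g2] at h3
      exact absurd h3 (not_le.mpr hSDc)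
    · intro pz2 hz2
      have k1 : pz2 (j-1) = pt j := by rw [hz2, Equiv.swap_apply_left, g2]
      have k2 : pz2 j = pt (j+1) := by rw [hz2, Equiv.swap_apply_right, g1]
      have k3 : pz2 (j+1) = pt (j-1) := by
        rw [hz2, Equiv.swap_apply_of_ne_of_ne (by omega) (by omega), g3]
      refine ⟨⟨by omega, by omega, ?_⟩, ?_⟩
      · rw [hj1]
        show (pz2 j).2 ≤ (pz2 (j-1)).2
        rw [k1, k2]; exact le_of_lt hSDc
      · intro h
        have h3 : (pz2 (j+1)).2 ≤ (pz2 j).2 := h.2.2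
        rw [k2, k3] at h3
        exact absurd h3 (not_le.mpr hcol)
end
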